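/- arXiv:1601.04274 — 6 statements merged into one kernel-verified Lean document; each statement's English description precedes it below -/
import Mathlib

section
/- Let x₀ > 1 be the unique real solution of x - x^{3/4} = 1. If real numbers x, y satisfy x - x^{3/4} < y ≤ x and y ≥ 1, then y ≤ x < y + (x₀ - 1)·y^{3/4}. -/
open Real

lemma aux_rpow_diff (a b : ℝ) (ha : 1 ≤ a) (hab : a ≤ b) :
    b ^ ((3:ℝ)/4) - a ^ ((3:ℝ)/4) ≤ b - a := by
  have ha0 : (0:ℝ) < a := lt_of_lt_of_le one_pos ha
  set s := (b - a) / a with hs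
  have hs0 : 0 ≤ s := div_nonneg (by linarith) ha0.le
  have hb : b = a * (1 + s) := by rw [hs, mul_add, mul_div_assoc', mul_comm a (b - a), mul_div_assoc, div_self ha0.ne']; ring
  have h1 : (1 + s) ^ ((3:ℝ)/4) ≤ 1 + (3/4) * s :=
    rpow_one_add_le_one_add_mul_self (by linarith) (by norm_num) (by norm_num)
  have h2 : b ^ ((3:ℝ)/4) = a ^ ((3:ℝ)/4) * (1 + s) ^ ((3:ℝ)/4) := by
    rw [hb, Real.mul_rpow ha0.le (by linarith)]
  have ha34 : a ^ ((3:ℝ)/4) ≤ a := by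
    nth_rewrite 2 [← Real.rpow_one a]
    exact Real.rpow_le_rpow_of_exponent_le ha (by norm_num)
  have ha34pos : 0 < a ^ ((3:ℝ)/4) := Real.rpow_pos_of_pos ha0 _
  have key : a ^ ((3:ℝ)/4) * s ≤ b - a := by
    rw [hs, mul_div_assoc', div_le_iff₀ ha0]
    nlinarith
  nlinarith [mul_le_mul_of_nonneg_left h1 ha34pos.le]

theorem stmt_0 (x₀ : ℝ) (hx₀ : 1 < x₀)
    (hroot : x₀ - x₀ ^ ((3:ℝ)/4) = 1)
    (huniq : ∀ z : ℝ, 1 < z → z - z ^ ((3:ℝ)/4) = 1 → z = x₀)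
    (x y : ℝ) (h1 : x - x ^ ((3:ℝ)/4) < y) (h2 : y ≤ x) (h3 : 1 ≤ y) :
    y ≤ x ∧ x < y + (x₀ - 1) * y ^ ((3:ℝ)/4) := by
  have hy0 : (0:ℝ) < y := lt_of_lt_of_le one_pos h3
  have hx1 : (1:ℝ) ≤ x := le_trans h3 h2
  have hx0y1 : (1:ℝ) ≤ x₀ * y := one_le_mul_of_one_le_of_one_le hx₀.le h3
  have h34 : (x₀ * y) ^ ((3:ℝ)/4) = (x₀ - 1) * y ^ ((3:ℝ)/4) := by
    rw [Real.mul_rpow (by linarith) hy0.le]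
    have : x₀ ^ ((3:ℝ)/4) = x₀ - 1 := by linarith
    rw [this]
  have hy34 : y ^ ((3:ℝ)/4) ≤ y := by
    nth_rewrite 2 [← Real.rpow_one y]
    exact Real.rpow_le_rpow_of_exponent_le h3 (by norm_num)
  have hxle : x ≤ x₀ * y := by
    by_contra h
    push_neg at h
    have hmono := aux_rpow_diff (x₀ * y) x hx0y1 h.le
    have hfy : y ≤ x₀ * y - (x₀ * y) ^ ((3:ℝ)/4) := by
      rw [h34]; nlinarith
    nlinarith
  have hx34 : x ^ ((3:ℝ)/4) ≤ (x₀ * y) ^ ((3:ℝ)/4) :=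
    Real.rpow_le_rpow (by linarith) hxle (by norm_num)
  refine ⟨h2, ?_⟩
  rw [h34] at hx34
  linarith
end

section
/- Let ξ₁, ξ₂, … be i.i.d. strictly positive random variables with partial sums Sₙ and ν(t) = #{k ≥ 0 : S_k ≤ t}. Then for every δ > 0, almost surely n^{-δ} · max_{0 ≤ j ≤ n} (ν(j+1) - ν(j)) → 0 as n → ∞ through the integers. -/
open MeasureTheory ProbabilityTheory Filter
open scoped ENNReal

noncomputable def partialSum {Ω : Type*} (ξ : ℕ → Ω → ℝ) (n : ℕ) (ω : Ω) : ℝ :=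
  ∑ i ∈ Finset.range n, ξ i ω

/-- `ν(j+1) - ν(j) = #{k ≥ 0 : j < S_k ≤ j+1}`, as an `ℝ≥0∞`-valued count. -/
noncomputable def renewalIncr {Ω : Type*} (ξ : ℕ → Ω → ℝ) (j : ℕ) (ω : Ω) : ℝ≥0∞ :=
  ∑' k : ℕ, if (j : ℝ) < partialSum ξ k ω ∧ partialSum ξ k ω ≤ (j : ℝ) + 1
    then (1 : ℝ≥0∞) else 0

-- product of integrals
lemma prod_exp_integral {Ω : Type*} [MeasurableSpace Ω] (μ : Measure Ω) [IsProbabilityMeasure μ]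
    (ξ : ℕ → Ω → ℝ) (hmeas : ∀ i, Measurable (ξ i))
    (hindep : iIndepFun ξ μ)
    (hid : ∀ i, IdentDistrib (ξ i) (ξ 0) μ μ) (F : Finset ℕ) :
    ∫ ω, ∏ i ∈ F, Real.exp (-ξ i ω) ∂μ = (∫ ω, Real.exp (-ξ 0 ω) ∂μ) ^ F.card := by
  classical
  have hmeas' : ∀ i, Measurable (fun ω => Real.exp (-ξ i ω)) := fun i =>
    Real.measurable_exp.comp (hmeas i).neg
  have hindep' : iIndepFun (fun i ω => Real.exp (-ξ i ω)) μ :=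
    hindep.comp _ (fun _ => Real.measurable_exp.comp measurable_neg)
  induction F using Finset.cons_induction with
  | empty => simp
  | cons a s ha ih =>
    have hIF : IndepFun (∏ j ∈ s, fun ω => Real.exp (-ξ j ω)) (fun ω => Real.exp (-ξ a ω)) μ :=
      hindep'.indepFun_finsetProd_of_notMem hmeas' ha
    have hprodmeas : Measurable (∏ j ∈ s, fun ω => Real.exp (-ξ j ω)) :=
      by rw [Finset.prod_fn]; exact Finset.measurable_prod s (fun i _ => hmeas' i)
    have hint := hIF.integral_mul_eq_mul_integral
      hprodmeas.aestronglyMeasurable (hmeas' a).aestronglyMeasurable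
    have heq : ∀ ω, (∏ i ∈ Finset.cons a s ha, Real.exp (-ξ i ω)) =
        ((∏ j ∈ s, fun ω => Real.exp (-ξ j ω)) * fun ω => Real.exp (-ξ a ω)) ω := by
      intro ω
      rw [Finset.prod_cons, Pi.mul_apply, Finset.prod_apply, mul_comm]
    rw [integral_congr_ae (Filter.Eventually.of_forall heq), hint]
    have hia : ∫ ω, Real.exp (-ξ a ω) ∂μ = ∫ ω, Real.exp (-ξ 0 ω) ∂μ :=
      ((hid a).comp (Real.measurable_exp.comp measurable_neg)).integral_eq
    have hps : ∫ ω, (∏ j ∈ s, fun ω => Real.exp (-ξ j ω)) ω ∂μ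
        = ∫ ω, ∏ i ∈ s, Real.exp (-ξ i ω) ∂μ := by
      simp [Finset.prod_apply]
    rw [hps, ih, hia, Finset.card_cons, pow_succ, mul_comm]

lemma chernoff {Ω : Type*} [MeasurableSpace Ω] (μ : Measure Ω) [IsProbabilityMeasure μ]
    (ξ : ℕ → Ω → ℝ) (hmeas : ∀ i, Measurable (ξ i))
    (hpos : ∀ i, ∀ᵐ ω ∂μ, 0 < ξ i ω)
    (hindep : iIndepFun ξ μ)
    (hid : ∀ i, IdentDistrib (ξ i) (ξ 0) μ μ) (F : Finset ℕ) (c : ℝ) :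
    μ {ω | ∑ i ∈ F, ξ i ω ≤ c} ≤
      ENNReal.ofReal (Real.exp c * (∫ ω, Real.exp (-ξ 0 ω) ∂μ) ^ F.card) := by
  classical
  set ρ := ∫ ω, Real.exp (-ξ 0 ω) ∂μ with hρ
  set g : Ω → ℝ := fun ω => ∏ i ∈ F, Real.exp (-ξ i ω) with hg
  have hgmeas : Measurable g := by
    apply Finset.measurable_prod
    exact fun i _ => Real.measurable_exp.comp (hmeas i).neg
  have hgnonneg : ∀ ω, 0 ≤ g ω := fun ω => Finset.prod_nonneg fun i _ => (Real.exp_pos _).le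
  have hgint : Integrable g μ := by
    apply Integrable.mono' (integrable_const (1:ℝ)) hgmeas.aestronglyMeasurable
    have hall : ∀ᵐ ω ∂μ, ∀ i, 0 < ξ i ω := ae_all_iff.2 hpos
    filter_upwards [hall] with ω hω
    rw [Real.norm_eq_abs, abs_of_nonneg (hgnonneg ω)]
    apply Finset.prod_le_one (fun i _ => (Real.exp_pos _).le)
    intro i _
    exact Real.exp_le_one_iff.2 (by linarith [hω i])
  have hgeq : ∀ ω, g ω = Real.exp (-(∑ i ∈ F, ξ i ω)) := by
    intro ω
    simp only [hg, ← Real.exp_sum, Finset.sum_neg_distrib]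
  have hsub : {ω | ∑ i ∈ F, ξ i ω ≤ c} ⊆ {ω | Real.exp (-c) ≤ g ω} := by
    intro ω hω
    rw [Set.mem_setOf_eq, hgeq]
    exact Real.exp_le_exp.2 (by simpa using hω)
  have hint : ∫ ω, g ω ∂μ = ρ ^ F.card := prod_exp_integral μ ξ hmeas hindep hid F
  have hmar := mul_meas_ge_le_integral_of_nonneg
    (Filter.Eventually.of_forall hgnonneg) hgint (Real.exp (-c))
  rw [hint] at hmar
  have hfin : μ {ω | Real.exp (-c) ≤ g ω} ≠ ⊤ := measure_ne_top μ _
  have htoReal : (μ {ω | Real.exp (-c) ≤ g ω}).toReal ≤ Real.exp c * ρ ^ F.card := by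
    have h2 : (μ {ω | Real.exp (-c) ≤ g ω}).toReal
        = Real.exp c * (Real.exp (-c) * (μ {ω | Real.exp (-c) ≤ g ω}).toReal) := by
      rw [← mul_assoc, ← Real.exp_add]; simp
    rw [h2]
    exact mul_le_mul_of_nonneg_left hmar (Real.exp_pos c).le
  calc μ {ω | ∑ i ∈ F, ξ i ω ≤ c} ≤ μ {ω | Real.exp (-c) ≤ g ω} := measure_mono hsub
    _ ≤ ENNReal.ofReal (Real.exp c * ρ ^ F.card) := by
        rw [ENNReal.le_ofReal_iff_toReal_le hfin]
        · exact htoReal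
        · positivity

lemma det_bound {Ω : Type*} (ξ : ℕ → Ω → ℝ) (ω : Ω) (hpos : ∀ i, 0 < ξ i ω)
    (n j M m : ℕ) (hj : j ≤ n) (hD : (n:ℝ) + 1 < partialSum ξ M ω)
    (hE : ∀ k < M, ¬ (∑ i ∈ Finset.Ico k (k + m), ξ i ω ≤ 1)) :
    renewalIncr ξ j ω ≤ (m : ℝ≥0∞) := by
  classical
  have hSmono : StrictMono (fun k => partialSum ξ k ω) := by
    apply strictMono_nat_of_lt_succ
    intro k
    have : partialSum ξ (k+1) ω = partialSum ξ k ω + ξ k ω := by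
      simp [partialSum, Finset.sum_range_succ]
    rw [this]
    linarith [hpos k]
  set P : ℕ → Prop := fun k => (j : ℝ) < partialSum ξ k ω ∧ partialSum ξ k ω ≤ (j : ℝ) + 1
    with hP
  by_cases hex : ∃ k, P k
  · obtain k₀ := Nat.find hex
    have hk₀ : P (Nat.find hex) := Nat.find_spec hex
    have hk₀M : Nat.find hex < M := by
      by_contra hc
      push_neg at hc
      have h1 : partialSum ξ M ω ≤ partialSum ξ (Nat.find hex) ω := hSmono.monotone hc
      have h2 : partialSum ξ (Nat.find hex) ω ≤ (j:ℝ) + 1 := hk₀.2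
      have : (j:ℝ) + 1 ≤ (n:ℝ) + 1 := by
        have := (Nat.cast_le (α := ℝ)).2 hj; linarith
      linarith
    have hsubset : ∀ k, P k → k ∈ Finset.Ico (Nat.find hex) (Nat.find hex + m) := by
      intro k hk
      rw [Finset.mem_Ico]
      refine ⟨Nat.find_min' hex hk, ?_⟩
      by_contra hc
      push_neg at hc
      apply hE (Nat.find hex) hk₀M
      have hsum1 : ∑ i ∈ Finset.Ico (Nat.find hex) (Nat.find hex + m), ξ i ω
          ≤ ∑ i ∈ Finset.Ico (Nat.find hex) k, ξ i ω := by
        apply Finset.sum_le_sum_of_subset_of_nonneg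
        · apply Finset.Ico_subset_Ico le_rfl hc
        · exact fun i _ _ => (hpos i).le
      have hsum2 : ∑ i ∈ Finset.Ico (Nat.find hex) k, ξ i ω
          = partialSum ξ k ω - partialSum ξ (Nat.find hex) ω := by
        rw [Finset.sum_Ico_eq_sub _ (le_trans (Nat.le_add_right _ m) hc)]
        rfl
      have := hk.2
      have := hk₀.1
      rw [hsum2] at hsum1
      linarith
    calc renewalIncr ξ j ω
        = ∑ k ∈ Finset.Ico (Nat.find hex) (Nat.find hex + m),
            (if P k then (1:ℝ≥0∞) else 0) := by
          apply tsum_eq_sum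
          intro k hk
          rw [if_neg]
          intro hPk
          exact hk (hsubset k hPk)
      _ ≤ ∑ _k ∈ Finset.Ico (Nat.find hex) (Nat.find hex + m), (1:ℝ≥0∞) := by
          apply Finset.sum_le_sum
          intro k _
          split <;> simp
      _ = (m : ℝ≥0∞) := by simp
  · push_neg at hex
    have : renewalIncr ξ j ω = 0 := by
      unfold renewalIncr
      convert tsum_zero with k
      rw [if_neg (hex k)]
    rw [this]
    exact zero_le

lemma summable_aux {ρ : ℝ} (h0 : 0 < ρ) (h1 : ρ < 1) {c δ : ℝ} (hc : 0 < c) (hδ : 0 < δ) :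
    Summable (fun n : ℕ => (n:ℝ) * ρ ^ (Nat.ceil (c * (n:ℝ) ^ δ))) := by
  have hb : 0 < -(Real.log ρ) * c := by
    have := Real.log_neg h0 h1
    nlinarith
  set b := -(Real.log ρ) * c with hbdef
  -- dominating function
  have hdom : ∀ n : ℕ, (n:ℝ) * ρ ^ (Nat.ceil (c * (n:ℝ) ^ δ)) ≤
      (n:ℝ) * Real.exp (-b * (n:ℝ) ^ δ) := by
    intro n
    apply mul_le_mul_of_nonneg_left _ (Nat.cast_nonneg n)
    have hrn : (0:ℝ) ≤ (n:ℝ) ^ δ := Real.rpow_nonneg (Nat.cast_nonneg n) δ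
    have hle : c * (n:ℝ) ^ δ ≤ (Nat.ceil (c * (n:ℝ) ^ δ) : ℝ) := Nat.le_ceil _
    calc ρ ^ (Nat.ceil (c * (n:ℝ) ^ δ))
        = Real.exp ((Nat.ceil (c * (n:ℝ) ^ δ) : ℝ) * Real.log ρ) := by
          rw [← Real.exp_log h0, ← Real.exp_nat_mul, Real.exp_log h0, mul_comm]
      _ ≤ Real.exp (-b * (n:ℝ) ^ δ) := by
          apply Real.exp_le_exp.2
          have hlog : Real.log ρ < 0 := Real.log_neg h0 h1
          have : -b * (n:ℝ) ^ δ = (c * (n:ℝ) ^ δ) * Real.log ρ := by ring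
          rw [this]
          exact mul_le_mul_of_nonpos_right hle hlog.le
  have htend : Tendsto (fun n : ℕ => ((n:ℝ) ^ δ) ^ (3/δ) * Real.exp (-b * (n:ℝ) ^ δ))
      atTop (nhds 0) :=
    (tendsto_rpow_mul_exp_neg_mul_atTop_nhds_zero (3/δ) b hb).comp
      ((tendsto_rpow_atTop hδ).comp tendsto_natCast_atTop_atTop)
  have hcube : ∀ n : ℕ, ((n:ℝ) ^ δ) ^ (3/δ) = (n:ℝ) ^ (3:ℕ) := by
    intro n
    rw [← Real.rpow_natCast (n:ℝ) 3, ← Real.rpow_mul (Nat.cast_nonneg n)]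
    norm_num
    rw [mul_div_cancel₀ _ (ne_of_gt hδ)]
    exact_mod_cast Real.rpow_natCast (n:ℝ) 3
  have htend3 : Tendsto (fun n : ℕ => (n:ℝ) ^ (3:ℕ) * Real.exp (-b * (n:ℝ) ^ δ))
      atTop (nhds 0) := by
    apply htend.congr
    intro n
    rw [hcube]
  have hsum2 : Summable (fun n : ℕ => ((n:ℝ)^(2:ℕ))⁻¹) := by
    have := Real.summable_one_div_nat_pow.2 (show 1 < 2 by norm_num)
    simpa [one_div] using this
  have hdom2 : Summable (fun n : ℕ => (n:ℝ) * Real.exp (-b * (n:ℝ) ^ δ)) := by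
    apply summable_of_isBigO_nat hsum2
    rw [Asymptotics.isBigO_iff]
    refine ⟨1, ?_⟩
    have h1 : ∀ᶠ n : ℕ in atTop, (n:ℝ) ^ (3:ℕ) * Real.exp (-b * (n:ℝ) ^ δ) ≤ 1 :=
      htend3.eventually (eventually_le_nhds (show (0:ℝ) < 1 by norm_num))
    filter_upwards [h1, eventually_ge_atTop 1] with n h1n hn
    have hn' : (0:ℝ) < (n:ℝ) := by exact_mod_cast hn
    rw [Real.norm_eq_abs, Real.norm_eq_abs, one_mul,
      abs_of_nonneg (mul_nonneg (Nat.cast_nonneg n) (Real.exp_pos _).le),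
      abs_of_nonneg (by positivity)]
    rw [inv_eq_one_div, le_div_iff₀ (by positivity)]
    calc (n:ℝ) * Real.exp (-b * (n:ℝ) ^ δ) * (n:ℝ)^(2:ℕ)
        = (n:ℝ)^(3:ℕ) * Real.exp (-b * (n:ℝ) ^ δ) := by ring
      _ ≤ 1 := h1n
  apply Summable.of_nonneg_of_le
    (fun n => mul_nonneg (Nat.cast_nonneg n) (pow_nonneg h0.le _)) hdom hdom2

theorem stmt_6 {Ω : Type*} [MeasurableSpace Ω] (μ : Measure Ω) [IsProbabilityMeasure μ]
    (ξ : ℕ → Ω → ℝ) (hmeas : ∀ i, Measurable (ξ i))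
    (hpos : ∀ i, ∀ᵐ ω ∂μ, 0 < ξ i ω)
    (hindep : iIndepFun ξ μ)
    (hid : ∀ i, IdentDistrib (ξ i) (ξ 0) μ μ)
    (δ : ℝ) (hδ : 0 < δ) :
    ∀ᵐ ω ∂μ, Tendsto
      (fun n : ℕ => (n : ℝ) ^ (-δ) *
        (Finset.range (n + 1)).sup' (by simp) (fun j => (renewalIncr ξ j ω).toReal))
      atTop (nhds 0) := by
  classical
  set ρ := ∫ ω, Real.exp (-ξ 0 ω) ∂μ with hρdef
  have hexpmeas : Measurable (fun ω => Real.exp (-ξ 0 ω)) :=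
    Real.measurable_exp.comp (hmeas 0).neg
  have hexpint : Integrable (fun ω => Real.exp (-ξ 0 ω)) μ := by
    apply Integrable.mono' (integrable_const (1:ℝ)) hexpmeas.aestronglyMeasurable
    filter_upwards [hpos 0] with ω hω
    rw [Real.norm_eq_abs, abs_of_nonneg (Real.exp_pos _).le]
    exact Real.exp_le_one_iff.2 (by linarith)
  have hρpos : 0 < ρ := by
    rw [hρdef, integral_pos_iff_support_of_nonneg (fun ω => (Real.exp_pos _).le) hexpint]
    have hsupp : Function.support (fun ω : Ω => Real.exp (-ξ 0 ω)) = Set.univ := by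
      ext ω; simp [Function.mem_support, (Real.exp_pos _).ne']
    rw [hsupp]
    simp
  have hρlt : ρ < 1 := by
    have hg : Integrable (fun ω => 1 - Real.exp (-ξ 0 ω)) μ := (integrable_const 1).sub hexpint
    have hpos' : 0 < ∫ ω, (1 - Real.exp (-ξ 0 ω)) ∂μ := by
      rw [integral_pos_iff_support_of_nonneg_ae ?_ hg]
      · have hsub : {ω | 0 < ξ 0 ω} ⊆ Function.support (fun ω => 1 - Real.exp (-ξ 0 ω)) := by
          intro ω hω
          have h1 : Real.exp (-ξ 0 ω) < 1 := by
            rw [Real.exp_lt_one_iff]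
            simpa using hω
          simp only [Function.mem_support]
          intro hcon
          linarith
        have hμs : μ {ω | ¬ (0 < ξ 0 ω)} = 0 := by
          have := hpos 0
          rwa [ae_iff] at this
        have huniv : μ Set.univ ≤ μ {ω | 0 < ξ 0 ω} + μ {ω | ¬ (0 < ξ 0 ω)} := by
          have : (Set.univ : Set Ω) ⊆ {ω | 0 < ξ 0 ω} ∪ {ω | ¬ (0 < ξ 0 ω)} := by
            intro ω _
            by_cases h : 0 < ξ 0 ω
            · exact Or.inl h
            · exact Or.inr h
          exact le_trans (measure_mono this) (measure_union_le _ _)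
        rw [hμs, add_zero, measure_univ] at huniv
        calc (0:ℝ≥0∞) < 1 := by norm_num
          _ ≤ μ {ω | 0 < ξ 0 ω} := huniv
          _ ≤ μ (Function.support (fun ω => 1 - Real.exp (-ξ 0 ω))) := measure_mono hsub
      · filter_upwards [hpos 0] with ω hω
        have : Real.exp (-ξ 0 ω) ≤ 1 := Real.exp_le_one_iff.2 (by linarith)
        simp only [Pi.zero_apply]
        linarith
    have heq : ∫ ω, (1 - Real.exp (-ξ 0 ω)) ∂μ = 1 - ρ := by
      rw [integral_sub (integrable_const 1) hexpint]
      simp [hρdef]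
    rw [heq] at hpos'
    linarith
  -- choose C
  obtain ⟨C, hCge, hCρ⟩ : ∃ C : ℕ, 1 ≤ C ∧ ρ ^ C ≤ Real.exp (-2) := by
    have htend : Tendsto (fun n : ℕ => ρ ^ n) atTop (nhds 0) :=
      tendsto_pow_atTop_nhds_zero_of_lt_one hρpos.le hρlt
    have hev := (eventually_ge_atTop 1).and
      (htend.eventually (eventually_le_nhds (Real.exp_pos (-2))))
    obtain ⟨C, hC⟩ := hev.exists
    exact ⟨C, hC.1, hC.2⟩
  -- Borel-Cantelli helper
  have key : ∀ (s : ℕ → Set Ω) (a : ℕ → ℝ), (∀ n, 0 ≤ a n) → Summable a →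
      (∀ n, μ (s n) ≤ ENNReal.ofReal (a n)) → ∀ᵐ ω ∂μ, ∀ᶠ n in atTop, ω ∉ s n := by
    intro s a h0 hsum hle
    apply ae_eventually_notMem
    have h := ENNReal.tsum_le_tsum hle
    rw [← ENNReal.ofReal_tsum_of_nonneg h0 hsum] at h
    exact ne_top_of_le_ne_top ENNReal.ofReal_ne_top h
  -- D events
  set D : ℕ → Set Ω := fun n => {ω | partialSum ξ (C * n) ω ≤ (n:ℝ) + 1} with hDdef
  have hDle : ∀ n, μ (D n) ≤ ENNReal.ofReal (Real.exp 1 * Real.exp (-1) ^ n) := by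
    intro n
    have h := chernoff μ ξ hmeas hpos hindep hid (Finset.range (C * n)) ((n:ℝ)+1)
    refine le_trans (le_of_eq ?_) (le_trans h (ENNReal.ofReal_le_ofReal ?_))
    · rfl
    rw [Finset.card_range]
    have h1 : ρ ^ (C * n) = (ρ ^ C) ^ n := by rw [pow_mul]
    have h2 : (ρ ^ C) ^ n ≤ (Real.exp (-2)) ^ n :=
      pow_le_pow_left₀ (pow_nonneg hρpos.le C) hCρ n
    calc Real.exp ((n:ℝ)+1) * ρ ^ (C*n)
        ≤ Real.exp ((n:ℝ)+1) * Real.exp (-2) ^ n := by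
          rw [h1]
          exact mul_le_mul_of_nonneg_left h2 (Real.exp_pos _).le
      _ = Real.exp 1 * Real.exp (-1) ^ n := by
          rw [← Real.exp_nat_mul, ← Real.exp_nat_mul, ← Real.exp_add, ← Real.exp_add]
          congr 1
          ring
  have hDae : ∀ᵐ ω ∂μ, ∀ᶠ n in atTop, ω ∉ D n := by
    apply key D _ (fun n => by positivity) _ hDle
    apply Summable.mul_left
    apply summable_geometric_of_lt_one (Real.exp_pos _).le
    rw [Real.exp_lt_one_iff]
    norm_num
  -- E events
  set Mq : ℕ → ℕ → ℕ := fun q n => Nat.ceil ((1/((q:ℝ)+1)) * (n:ℝ) ^ δ) with hMqdef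
  set E : ℕ → ℕ → Set Ω := fun q n =>
    ⋃ k ∈ Finset.range (C * n), {ω | ∑ i ∈ Finset.Ico k (k + Mq q n), ξ i ω ≤ 1} with hEdef
  have hEle : ∀ q n, μ (E q n)
      ≤ ENNReal.ofReal (((C:ℝ) * Real.exp 1) * ((n:ℝ) * ρ ^ (Mq q n))) := by
    intro q n
    refine le_trans (measure_biUnion_finset_le _ _) ?_
    have hone : ∀ k, μ {ω | ∑ i ∈ Finset.Ico k (k + Mq q n), ξ i ω ≤ 1}
        ≤ ENNReal.ofReal (Real.exp 1 * ρ ^ (Mq q n)) := by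
      intro k
      have h := chernoff μ ξ hmeas hpos hindep hid (Finset.Ico k (k + Mq q n)) 1
      rwa [Nat.card_Ico, Nat.add_sub_cancel_left] at h
    refine le_trans (Finset.sum_le_sum (fun k _ => hone k)) ?_
    rw [Finset.sum_const, Finset.card_range, nsmul_eq_mul,
      ← ENNReal.ofReal_natCast (C * n), ← ENNReal.ofReal_mul (by positivity)]
    apply ENNReal.ofReal_le_ofReal
    push_cast
    exact le_of_eq (by ring)
  have hEae : ∀ᵐ ω ∂μ, ∀ q, ∀ᶠ n in atTop, ω ∉ E q n := by
    rw [ae_all_iff]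
    intro q
    apply key _ _ (fun n => by positivity) _ (hEle q)
    apply Summable.mul_left
    exact summable_aux hρpos hρlt (by positivity : (0:ℝ) < 1/((q:ℝ)+1)) hδ
  have hposae : ∀ᵐ ω ∂μ, ∀ i, 0 < ξ i ω := ae_all_iff.2 hpos
  filter_upwards [hDae, hEae, hposae] with ω hDω hEω hposω
  rw [Metric.tendsto_atTop]
  intro ε hε
  obtain ⟨q, hq⟩ : ∃ q : ℕ, 1/((q:ℝ)+1) < ε/2 := by
    obtain ⟨q, hq⟩ := exists_nat_gt (2/ε)
    refine ⟨q, ?_⟩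
    rw [div_lt_iff₀ (by positivity)]
    rw [div_lt_iff₀ hε] at hq
    nlinarith
  have hrtend : Tendsto (fun n : ℕ => (n:ℝ) ^ (-δ)) atTop (nhds 0) :=
    (tendsto_rpow_neg_atTop hδ).comp tendsto_natCast_atTop_atTop
  have hsmall : ∀ᶠ n : ℕ in atTop, (n:ℝ) ^ (-δ) < ε/2 :=
    hrtend.eventually (eventually_lt_nhds (by positivity))
  have hall := hDω.and ((hEω q).and (hsmall.and (eventually_ge_atTop 1)))
  obtain ⟨N, hN⟩ := eventually_atTop.1 hall
  refine ⟨N, fun n hn => ?_⟩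
  obtain ⟨hD', hE', hsm, hn1⟩ := hN n hn
  have hnR : (1:ℝ) ≤ (n:ℝ) := by exact_mod_cast hn1
  have hnpos : (0:ℝ) < (n:ℝ) := by linarith
  -- bound each renewalIncr
  have hb : ∀ j ∈ Finset.range (n+1), (renewalIncr ξ j ω).toReal ≤ (Mq q n : ℝ) := by
    intro j hj
    rw [Finset.mem_range, Nat.lt_succ_iff] at hj
    have hD'' : (n:ℝ) + 1 < partialSum ξ (C * n) ω := by
      have h := hD'
      simp only [hDdef, Set.mem_setOf_eq, not_le] at h
      exact h
    have hE'' : ∀ k < C * n, ¬ (∑ i ∈ Finset.Ico k (k + Mq q n), ξ i ω ≤ 1) := by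
      intro k hk hcon
      apply hE'
      simp only [hEdef, Set.mem_iUnion]
      exact ⟨k, Finset.mem_range.2 hk, hcon⟩
    have hdb := det_bound ξ ω hposω n j (C*n) (Mq q n) hj hD'' hE''
    have := ENNReal.toReal_mono (by simp) hdb
    simpa using this
  have hsup : (Finset.range (n+1)).sup' (by simp) (fun j => (renewalIncr ξ j ω).toReal)
      ≤ (Mq q n : ℝ) := Finset.sup'_le _ _ hb
  have hsupnonneg : 0 ≤ (Finset.range (n+1)).sup' (by simp)
      (fun j => (renewalIncr ξ j ω).toReal) := by
    exact le_trans ENNReal.toReal_nonneg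
      (Finset.le_sup' (fun j => (renewalIncr ξ j ω).toReal) (Finset.self_mem_range_succ n))
  have hrν : (0:ℝ) ≤ (n:ℝ) ^ (-δ) := Real.rpow_nonneg hnpos.le _
  have hM : (Mq q n : ℝ) ≤ (1/((q:ℝ)+1)) * (n:ℝ) ^ δ + 1 := by
    have := Nat.ceil_lt_add_one (show (0:ℝ) ≤ (1/((q:ℝ)+1)) * (n:ℝ) ^ δ by positivity)
    exact le_of_lt this
  have hmul : (n:ℝ) ^ (-δ) * (n:ℝ) ^ δ = 1 := by
    rw [← Real.rpow_add hnpos]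
    simp
  have hbound : (n:ℝ) ^ (-δ) * (Finset.range (n+1)).sup' (by simp)
      (fun j => (renewalIncr ξ j ω).toReal) < ε := by
    calc (n:ℝ) ^ (-δ) * (Finset.range (n+1)).sup' (by simp)
          (fun j => (renewalIncr ξ j ω).toReal)
        ≤ (n:ℝ) ^ (-δ) * (Mq q n : ℝ) := mul_le_mul_of_nonneg_left hsup hrν
      _ ≤ (n:ℝ) ^ (-δ) * ((1/((q:ℝ)+1)) * (n:ℝ) ^ δ + 1) :=
          mul_le_mul_of_nonneg_left hM hrν
      _ = (1/((q:ℝ)+1)) * ((n:ℝ) ^ (-δ) * (n:ℝ) ^ δ) + (n:ℝ) ^ (-δ) := by ring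
      _ = 1/((q:ℝ)+1) + (n:ℝ) ^ (-δ) := by rw [hmul]; ring
      _ < ε/2 + ε/2 := by exact add_lt_add hq hsm
      _ = ε := by ring
  rw [Real.dist_eq, sub_zero, abs_of_nonneg (mul_nonneg hrν hsupnonneg)]
  exact hbound
end

section
/- Let ξ₁, ξ₂, … be i.i.d. strictly positive random variables with partial sums Sₙ, let ν(t) = #{k ≥ 0 : S_k ≤ t}, and let G : [0,∞) → [0,∞) be locally bounded and nonincreasing. Then for every integer l ≥ 1 there is a constant C such that for all sufficiently large t, E[(Σ_{k≥0} G(t - S_k) 1{S_k ≤ t})^l] ≤ C · (∫₀^t G(y) dy + 1)^l. -/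
open MeasureTheory ProbabilityTheory Filter Set
open scoped ENNReal

/-- The shot-noise sum `∑_{k≥0} G(t - S_k) 1{S_k ≤ t}`, as an `ℝ≥0∞`-valued sum. -/
noncomputable def shotSum {Ω : Type*} (G : ℝ → ℝ) (ξ : ℕ → Ω → ℝ) (t : ℝ) (ω : Ω) : ℝ≥0∞ :=
  ∑' k : ℕ, ENNReal.ofReal
    (if partialSum ξ k ω ≤ t then G (t - partialSum ξ k ω) else 0)

open Real

set_option linter.unusedSectionVars false

namespace ShotAux


lemma nat_telescope (l : ℕ) (hl : 1 ≤ l) :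
    ∀ n : ℕ, ∑ j ∈ Finset.range n, ((j+1)^l - j^l) = n^l := by
  intro n
  induction n with
  | zero => rw [Finset.range_zero, Finset.sum_empty, Nat.zero_pow (by omega : 0 < l)]
  | succ n ih =>
    rw [Finset.sum_range_succ, ih, Nat.add_sub_cancel' (Nat.pow_le_pow_left (Nat.le_succ n) l)]

lemma pow_le_tsum_layer (l : ℕ) (hl : 1 ≤ l) (x : ℝ≥0∞) :
    x ^ l ≤ ∑' j : ℕ, (((j+1)^l - j^l : ℕ) : ℝ≥0∞) * (if (j:ℝ≥0∞) < x then 1 else 0) := by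
  have hcoef : ∀ j : ℕ, (1:ℝ≥0∞) ≤ (((j+1)^l - j^l : ℕ) : ℝ≥0∞) := by
    intro j
    have h2 : j ^ l < (j+1)^l := Nat.pow_lt_pow_left (by omega) (by omega)
    have : 1 ≤ (j+1)^l - j^l := by omega
    exact_mod_cast this
  rcases eq_or_ne x ⊤ with rfl | hx
  · have htop : (∑' _ : ℕ, (1:ℝ≥0∞)) = ⊤ :=
      ENNReal.tsum_const_eq_top_of_ne_zero one_ne_zero
    have hle : (⊤:ℝ≥0∞) ≤ ∑' j : ℕ, (((j+1)^l - j^l : ℕ) : ℝ≥0∞) * (if (j:ℝ≥0∞) < ⊤ then 1 else 0) := by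
      refine le_trans (le_of_eq htop.symm) (ENNReal.tsum_le_tsum fun j => ?_)
      have hj : (if (j:ℝ≥0∞) < ⊤ then (1:ℝ≥0∞) else 0) = 1 := by
        rw [if_pos]; exact ENNReal.natCast_lt_top j
      rw [hj, mul_one]
      exact hcoef j
    exact le_top.trans hle
  · have hex : ∃ n : ℕ, x ≤ n := by
      obtain ⟨n, hn⟩ := ENNReal.exists_nat_gt hx
      exact ⟨n, hn.le⟩
    set n := Nat.find hex with hn
    have hxn : x ≤ n := Nat.find_spec hex
    have hmin : ∀ j < n, (j:ℝ≥0∞) < x := by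
      intro j hj
      exact lt_of_not_ge (Nat.find_min hex hj)
    calc x ^ l ≤ (n:ℝ≥0∞) ^ l := by gcongr
    _ = ((n^l : ℕ) : ℝ≥0∞) := by push_cast; ring
    _ = ∑ j ∈ Finset.range n, (((j+1)^l - j^l : ℕ) : ℝ≥0∞) := by
        rw [← Nat.cast_sum, nat_telescope l hl]
    _ = ∑ j ∈ Finset.range n, (((j+1)^l - j^l : ℕ) : ℝ≥0∞) * (if (j:ℝ≥0∞) < x then 1 else 0) := by
        refine Finset.sum_congr rfl fun j hj => ?_
        rw [if_pos (hmin j (Finset.mem_range.mp hj)), mul_one]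
    _ ≤ _ := ENNReal.sum_le_tsum _

lemma hoelder_sum {ι : Type*} (s : Finset ι) (a x : ι → ℝ≥0∞) (ha : ∀ i ∈ s, a i ≠ ⊤)
    (l : ℕ) (hl : 1 ≤ l) :
    (∑ i ∈ s, a i * x i) ^ l ≤ (∑ i ∈ s, a i) ^ (l-1) * ∑ i ∈ s, a i * x i ^ l := by
  set A := ∑ i ∈ s, a i with hA
  rcases eq_or_ne A 0 with hA0 | hA0
  · have hz : ∀ i ∈ s, a i = 0 := by
      intro i hi
      exact le_antisymm (hA0 ▸ Finset.single_le_sum (fun i _ => zero_le) hi) zero_le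
    have h1 : (∑ i ∈ s, a i * x i) = 0 := Finset.sum_eq_zero fun i hi => by rw [hz i hi, zero_mul]
    rw [h1, zero_pow (by omega)]
    exact zero_le
  · have hAt : A ≠ ⊤ := by
      rw [hA]
      exact (ENNReal.sum_lt_top.mpr (fun i hi => lt_top_iff_ne_top.mpr (ha i hi))).ne
    have hw : ∑ i ∈ s, a i * A⁻¹ = 1 := by
      rw [← Finset.sum_mul, ← hA, ENNReal.mul_inv_cancel hA0 hAt]
    have hjensen := ENNReal.rpow_arith_mean_le_arith_mean_rpow (s := s)
      (fun i => a i * A⁻¹) x hw (p := (l:ℝ)) (by exact_mod_cast hl)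
    simp only [ENNReal.rpow_natCast] at hjensen
    have h1 : ∑ i ∈ s, a i * A⁻¹ * x i = (∑ i ∈ s, a i * x i) * A⁻¹ := by
      rw [Finset.sum_mul]
      exact Finset.sum_congr rfl fun i _ => by ring
    have h2 : ∑ i ∈ s, a i * A⁻¹ * x i ^ l = (∑ i ∈ s, a i * x i ^ l) * A⁻¹ := by
      rw [Finset.sum_mul]
      exact Finset.sum_congr rfl fun i _ => by ring
    rw [h1, h2] at hjensen
    have hAl : A ^ l = A * A ^ (l - 1) := by
      conv_lhs => rw [show l = 1 + (l-1) by omega]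
      rw [pow_add, pow_one]
    calc (∑ i ∈ s, a i * x i) ^ l
        = ((∑ i ∈ s, a i * x i) * A⁻¹) ^ l * A ^ l := by
          rw [mul_pow, mul_assoc, ← mul_pow, ENNReal.inv_mul_cancel hA0 hAt, one_pow, mul_one]
      _ ≤ (∑ i ∈ s, a i * x i ^ l) * A⁻¹ * A ^ l := by gcongr
      _ = A ^ (l-1) * ∑ i ∈ s, a i * x i ^ l := by
          rw [hAl, ← mul_assoc, mul_assoc _ A⁻¹ A, ENNReal.inv_mul_cancel hA0 hAt, mul_one]
          ring


variable {Ω : Type*} [MeasurableSpace Ω] {μ : Measure Ω} [IsProbabilityMeasure μ]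
  {ξ : ℕ → Ω → ℝ}


lemma chernoff (hmeas : ∀ i, Measurable (ξ i)) (hpos : ∀ i, ∀ᵐ ω ∂μ, 0 < ξ i ω)
    (hindep : iIndepFun ξ μ)
    (hid : ∀ i, IdentDistrib (ξ i) (ξ 0) μ μ)
    {s : ℝ} (hs : 0 < s) (F : Finset ℕ) :
    μ {ω | ∑ i ∈ F, ξ i ω ≤ 1}
      ≤ ENNReal.ofReal (Real.exp s) * ENNReal.ofReal (mgf (ξ 0) μ (-s)) ^ F.card := by
  classical
  set Y : Ω → ℝ := fun ω => Real.exp (-s * ∑ i ∈ F, ξ i ω) with hY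
  have hYmeas : Measurable Y := by
    exact (measurable_const.mul (Finset.measurable_sum F (fun i _ => hmeas i))).exp
  have hsum_nonneg : ∀ᵐ ω ∂μ, 0 ≤ ∑ i ∈ F, ξ i ω := by
    filter_upwards [ae_all_iff.mpr hpos] with ω hω
    exact Finset.sum_nonneg fun i _ => (hω i).le
  have hY1 : ∀ᵐ ω ∂μ, ‖Y ω‖ ≤ 1 := by
    filter_upwards [hsum_nonneg] with ω hω
    rw [Real.norm_eq_abs, abs_of_pos (Real.exp_pos _)]
    exact Real.exp_le_one_iff.mpr (by nlinarith)
  have hYint : Integrable Y μ :=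
    (integrable_const (1:ℝ)).mono' hYmeas.aestronglyMeasurable hY1
  set ε : ℝ≥0∞ := ENNReal.ofReal (Real.exp (-s)) with hε
  have hεpos : ε ≠ 0 := by
    simp [hε, ENNReal.ofReal_eq_zero, not_le, Real.exp_pos]
  have hsub : {ω | ∑ i ∈ F, ξ i ω ≤ 1} ⊆ {ω | ε ≤ ENNReal.ofReal (Y ω)} := by
    intro ω hω
    simp only [mem_setOf_eq] at hω ⊢
    refine ENNReal.ofReal_le_ofReal (Real.exp_le_exp.mpr (by nlinarith))
  have hmarkov := mul_meas_ge_le_lintegral₀ (μ := μ)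
    (f := fun ω => ENNReal.ofReal (Y ω)) (hYmeas.ennreal_ofReal.aemeasurable) ε
  have hlint : (∫⁻ ω, ENNReal.ofReal (Y ω) ∂μ) = ENNReal.ofReal (∫ ω, Y ω ∂μ) :=
    (MeasureTheory.ofReal_integral_eq_lintegral_ofReal hYint
      (ae_of_all _ fun ω => (Real.exp_pos _).le)).symm
  have hmgf : (∫ ω, Y ω ∂μ) = mgf (ξ 0) μ (-s) ^ F.card := by
    have h1 : (∫ ω, Y ω ∂μ) = mgf (∑ i ∈ F, ξ i) μ (-s) := by
      simp only [mgf, hY, Finset.sum_apply]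
    rw [h1, hindep.mgf_sum hmeas F]
    have h2 : ∀ i, mgf (ξ i) μ (-s) = mgf (ξ 0) μ (-s) := by
      intro i
      have := ((hid i).comp (u := fun x : ℝ => Real.exp (-s * x))
        ((measurable_const.mul measurable_id).exp)).integral_eq
      simpa [mgf, Function.comp] using this
    rw [Finset.prod_congr rfl (fun i _ => h2 i), Finset.prod_const]
  have key : ε * μ {ω | ∑ i ∈ F, ξ i ω ≤ 1}
      ≤ ENNReal.ofReal (mgf (ξ 0) μ (-s)) ^ F.card := by
    calc ε * μ {ω | ∑ i ∈ F, ξ i ω ≤ 1}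
        ≤ ε * μ {ω | ε ≤ ENNReal.ofReal (Y ω)} := mul_le_mul_right (measure_mono hsub) ε
      _ ≤ ∫⁻ ω, ENNReal.ofReal (Y ω) ∂μ := hmarkov
      _ = ENNReal.ofReal (mgf (ξ 0) μ (-s) ^ F.card) := by rw [hlint, hmgf]
      _ = ENNReal.ofReal (mgf (ξ 0) μ (-s)) ^ F.card :=
          ENNReal.ofReal_pow mgf_nonneg F.card
  have hεinv : ε⁻¹ = ENNReal.ofReal (Real.exp s) := by
    rw [hε, ← ENNReal.ofReal_inv_of_pos (Real.exp_pos _), ← Real.exp_neg, neg_neg]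
  calc μ {ω | ∑ i ∈ F, ξ i ω ≤ 1}
      = ε⁻¹ * (ε * μ {ω | ∑ i ∈ F, ξ i ω ≤ 1}) := by
        rw [← mul_assoc, ENNReal.inv_mul_cancel hεpos (by simp [hε]), one_mul]
    _ ≤ ε⁻¹ * ENNReal.ofReal (mgf (ξ 0) μ (-s)) ^ F.card := by gcongr
    _ = ENNReal.ofReal (Real.exp s) * ENNReal.ofReal (mgf (ξ 0) μ (-s)) ^ F.card := by
        rw [hεinv]

lemma exists_rate (hmeas : ∀ i, Measurable (ξ i)) (hpos : ∀ i, ∀ᵐ ω ∂μ, 0 < ξ i ω) :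
    ∃ s : ℝ, 0 < s ∧ mgf (ξ 0) μ (-s) < 1 := by
  have htend : Tendsto (fun n : ℕ => mgf (ξ 0) μ (-(n+1 : ℝ))) atTop (nhds 0) := by
    have h0 : (0:ℝ) = ∫ ω, (0:ℝ) ∂μ := by simp
    rw [h0]
    refine MeasureTheory.tendsto_integral_of_dominated_convergence
      (bound := fun _ => (1:ℝ))
      (F := fun n ω => Real.exp (-(n+1 : ℝ) * ξ 0 ω)) ?_ ?_ ?_ ?_
    · intro n
      exact ((measurable_const.mul (hmeas 0)).exp).aestronglyMeasurable
    · exact integrable_const 1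
    · intro n
      filter_upwards [hpos 0] with ω hω
      rw [Real.norm_eq_abs, abs_of_pos (Real.exp_pos _)]
      refine Real.exp_le_one_iff.mpr (by nlinarith [Nat.cast_nonneg (α := ℝ) n])
    · filter_upwards [hpos 0] with ω hω
      have hlt : Real.exp (-ξ 0 ω) < 1 := Real.exp_lt_one_iff.mpr (by linarith)
      have h1 := tendsto_pow_atTop_nhds_zero_of_lt_one (Real.exp_pos (-ξ 0 ω)).le hlt
      have h2 : Tendsto (fun n : ℕ => Real.exp (-ξ 0 ω) ^ (n+1)) atTop (nhds 0) :=
        h1.comp (tendsto_add_atTop_nat 1)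
      refine h2.congr fun n => ?_
      rw [show ((n:ℕ)+1 : ℕ) = n+1 from rfl, ← Real.exp_nat_mul]
      congr 1
      push_cast
      ring
  have hev : ∀ᶠ n : ℕ in atTop, mgf (ξ 0) μ (-(n+1 : ℝ)) < 1 :=
    htend.eventually_lt_const one_pos
  obtain ⟨n, hn⟩ := hev.exists
  exact ⟨(n:ℝ)+1, by positivity, hn⟩



noncomputable def W {Ω : Type*} (ξ : ℕ → Ω → ℝ) (a : ℝ) (ω : Ω) : ℝ≥0∞ :=
  ∑' k : ℕ, (if partialSum ξ k ω ∈ Set.Ioc a (a+1) then (1:ℝ≥0∞) else 0)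

lemma pSum_meas (hmeas : ∀ i, Measurable (ξ i)) (k : ℕ) : Measurable (partialSum ξ k) :=
  Finset.measurable_sum _ (fun i _ => hmeas i)

lemma W_meas (hmeas : ∀ i, Measurable (ξ i)) (a : ℝ) : Measurable (W ξ a) := by
  refine Measurable.ennreal_tsum fun k => Measurable.ite ?_ measurable_const measurable_const
  exact (pSum_meas hmeas k) measurableSet_Ioc

def Ak (ξ : ℕ → Ω → ℝ) (a : ℝ) (k : ℕ) : Set Ω :=
  {ω | partialSum ξ k ω ∈ Set.Ioc a (a+1) ∧ ∀ i < k, partialSum ξ i ω ∉ Set.Ioc a (a+1)}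

def Dk (ξ : ℕ → Ω → ℝ) (k j : ℕ) : Set Ω :=
  {ω | ∑ i ∈ Finset.Ico k (k+j), ξ i ω ≤ 1}

lemma Ak_meas (hmeas : ∀ i, Measurable (ξ i)) (a : ℝ) (k : ℕ) : MeasurableSet (Ak ξ a k) := by
  have h : Ak ξ a k = (partialSum ξ k ⁻¹' Set.Ioc a (a+1)) ∩
      ⋂ (i : ℕ) (_ : i < k), (partialSum ξ i ⁻¹' (Set.Ioc a (a+1))ᶜ) := by
    ext ω
    simp [Ak]
  rw [h]
  exact ((pSum_meas hmeas k) measurableSet_Ioc).inter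
    (MeasurableSet.iInter fun i => MeasurableSet.iInter fun _ =>
      (pSum_meas hmeas i) measurableSet_Ioc.compl)

lemma Ak_disj (a : ℝ) : Pairwise (Function.onFun Disjoint (Ak (Ω := Ω) ξ a)) := by
  intro k k' hkk'
  rcases hkk'.lt_or_gt with h | h
  · exact Set.disjoint_left.mpr fun ω h1 h2 => (h2.2 k h) h1.1
  · exact Set.disjoint_left.mpr fun ω h1 h2 => (h1.2 k' h) h2.1

lemma measure_Ak_inter_Dk (hmeas : ∀ i, Measurable (ξ i))
    (hindep : iIndepFun ξ μ) (a : ℝ) (k j : ℕ) :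
    μ (Ak ξ a k ∩ Dk ξ k j) = μ (Ak ξ a k) * μ (Dk ξ k j) := by
  classical
  set S₁ : Finset ℕ := Finset.range k with hS₁
  set S₂ : Finset ℕ := Finset.Ico k (k+j) with hS₂
  have hdisj : Disjoint S₁ S₂ := by
    rw [Finset.disjoint_left]
    intro i hi1 hi2
    simp only [hS₁, hS₂, Finset.mem_range, Finset.mem_Ico] at hi1 hi2
    omega
  have hIF := hindep.indepFun_finset S₁ S₂ hdisj hmeas
  set f : Ω → (S₁ → ℝ) := fun ω (i : S₁) => ξ i ω with hf
  set g : Ω → (S₂ → ℝ) := fun ω (i : S₂) => ξ i ω with hg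
  set Φ : (S₁ → ℝ) → ℕ → ℝ := fun v i => ∑ i' : S₁, (if (i' : ℕ) < i then v i' else 0) with hΦdef
  have hΦ : ∀ ω, ∀ i ≤ k, Φ (f ω) i = partialSum ξ i ω := by
    intro ω i hi
    have h1 : Φ (f ω) i = ∑ i' ∈ S₁, (if i' < i then ξ i' ω else 0) :=
      Finset.sum_coe_sort S₁ (fun i' => if i' < i then ξ i' ω else 0)
    have h2 : S₁.filter (· < i) = Finset.range i := by
      ext x
      simp only [hS₁, Finset.mem_filter, Finset.mem_range]
      omega
    rw [h1, ← Finset.sum_filter, h2]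
    rfl
  have hΦmeas : ∀ i, Measurable (fun v : S₁ → ℝ => Φ v i) := by
    intro i
    refine Finset.measurable_sum Finset.univ fun i' _ => ?_
    by_cases h : (i' : ℕ) < i
    · simp only [if_pos h]
      exact measurable_pi_apply i'
    · simp only [if_neg h]
      exact measurable_const
  set MA : Set (S₁ → ℝ) :=
    {v | Φ v k ∈ Set.Ioc a (a+1) ∧ ∀ i < k, Φ v i ∉ Set.Ioc a (a+1)} with hMA
  have hMAmeas : MeasurableSet MA := by
    have h : MA = ((fun v => Φ v k) ⁻¹' Set.Ioc a (a+1)) ∩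
        ⋂ (i : ℕ) (_ : i < k), ((fun v => Φ v i) ⁻¹' (Set.Ioc a (a+1))ᶜ) := by
      ext v
      simp [hMA]
    rw [h]
    exact ((hΦmeas k) measurableSet_Ioc).inter
      (MeasurableSet.iInter fun i => MeasurableSet.iInter fun _ =>
        (hΦmeas i) measurableSet_Ioc.compl)
  set MD : Set (S₂ → ℝ) := {w | ∑ i' : S₂, w i' ≤ 1} with hMD
  have hMDmeas : MeasurableSet MD :=
    measurableSet_le (Finset.measurable_sum _ fun i' _ => measurable_pi_apply i') measurable_const
  have hAeq : Ak ξ a k = f ⁻¹' MA := by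
    ext ω
    simp only [Ak, Set.mem_setOf_eq, Set.mem_preimage, hMA]
    constructor
    · rintro ⟨h1, h2⟩
      exact ⟨by rwa [hΦ ω k le_rfl], fun i hi => by rw [hΦ ω i hi.le]; exact h2 i hi⟩
    · rintro ⟨h1, h2⟩
      exact ⟨by rwa [hΦ ω k le_rfl] at h1,
        fun i hi => by rw [← hΦ ω i hi.le]; exact h2 i hi⟩
  have hDeq : Dk ξ k j = g ⁻¹' MD := by
    ext ω
    simp only [Dk, Set.mem_setOf_eq, Set.mem_preimage, hMD]
    have h : ∑ i' : S₂, g ω i' = ∑ i' ∈ S₂, ξ i' ω :=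
      Finset.sum_coe_sort S₂ (fun i => ξ i ω)
    rw [h]
  rw [hAeq, hDeq]
  exact hIF.measure_inter_preimage_eq_mul _ _ hMAmeas hMDmeas

lemma tail_bound (hmeas : ∀ i, Measurable (ξ i)) (hpos : ∀ i, ∀ᵐ ω ∂μ, 0 < ξ i ω)
    (hindep : iIndepFun ξ μ)
    (hid : ∀ i, IdentDistrib (ξ i) (ξ 0) μ μ)
    {s : ℝ} (hs : 0 < s) (a : ℝ) (j : ℕ) :
    μ {ω | (j:ℝ≥0∞) < W ξ a ω}
      ≤ ENNReal.ofReal (Real.exp s) * ENNReal.ofReal (mgf (ξ 0) μ (-s)) ^ j := by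
  have hP : ∀ᵐ ω ∂μ, ∀ i, 0 < ξ i ω := ae_all_iff.mpr hpos
  have hincl : ∀ᵐ ω ∂μ, ω ∈ {ω | (j:ℝ≥0∞) < W ξ a ω} → ω ∈ ⋃ k, Ak ξ a k ∩ Dk ξ k j := by
    filter_upwards [hP] with ω hω hmem
    replace hmem : (j:ℝ≥0∞) < W ξ a ω := hmem
    have hmono : ∀ m m' : ℕ, m ≤ m' → partialSum ξ m ω ≤ partialSum ξ m' ω := by
      intro m m' h
      exact Finset.sum_le_sum_of_subset_of_nonneg (Finset.range_subset_range.mpr h)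
        (fun i _ _ => (hω i).le)
    have hne : ∃ k, partialSum ξ k ω ∈ Set.Ioc a (a+1) := by
      by_contra h
      push_neg at h
      have hz : W ξ a ω = 0 := ENNReal.tsum_eq_zero.mpr fun k => if_neg (h k)
      rw [hz] at hmem
      exact absurd hmem (by simp)
    have hk0 := Nat.find_spec hne
    set k0 := Nat.find hne with hk0def
    have hk0min : ∀ i < k0, partialSum ξ i ω ∉ Set.Ioc a (a+1) :=
      fun i hi => Nat.find_min hne hi
    have hbig : ∃ k', k0 + j ≤ k' ∧ partialSum ξ k' ω ∈ Set.Ioc a (a+1) := by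
      by_contra h
      push_neg at h
      have hWle : W ξ a ω ≤ (j:ℝ≥0∞) := by
        have hb : ∀ k, (if partialSum ξ k ω ∈ Set.Ioc a (a+1) then (1:ℝ≥0∞) else 0)
            ≤ (if k ∈ Finset.Ico k0 (k0+j) then (1:ℝ≥0∞) else 0) := by
          intro k
          by_cases hk : partialSum ξ k ω ∈ Set.Ioc a (a+1)
          · have h1 : k0 ≤ k := Nat.find_min' hne hk
            have h2 : k < k0 + j := by
              by_contra hcon
              exact (h k (by omega)) hk
            rw [if_pos hk, if_pos (Finset.mem_Ico.mpr ⟨h1, h2⟩)]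
          · rw [if_neg hk]
            exact zero_le
        calc W ξ a ω ≤ ∑' k : ℕ, (if k ∈ Finset.Ico k0 (k0+j) then (1:ℝ≥0∞) else 0) :=
              ENNReal.tsum_le_tsum hb
        _ = ∑ k ∈ Finset.Ico k0 (k0+j), (if k ∈ Finset.Ico k0 (k0+j) then (1:ℝ≥0∞) else 0) :=
              tsum_eq_sum (fun k hk => if_neg hk)
        _ = ∑ k ∈ Finset.Ico k0 (k0+j), (1:ℝ≥0∞) :=
              Finset.sum_congr rfl fun k hk => if_pos hk
        _ = (j:ℝ≥0∞) := by
              rw [Finset.sum_const, Nat.card_Ico, Nat.add_sub_cancel_left, nsmul_eq_mul, mul_one]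
      exact absurd (lt_of_lt_of_le hmem hWle) (lt_irrefl _)
    obtain ⟨k', hk'1, hk'2⟩ := hbig
    refine Set.mem_iUnion.mpr ⟨k0, ⟨⟨hk0, hk0min⟩, ?_⟩⟩
    show ∑ i ∈ Finset.Ico k0 (k0+j), ξ i ω ≤ 1
    have hsub : ∑ i ∈ Finset.Ico k0 (k0+j), ξ i ω
        = partialSum ξ (k0+j) ω - partialSum ξ k0 ω := by
      rw [Finset.sum_Ico_eq_sub _ (by omega : k0 ≤ k0 + j)]
      rfl
    have h1 := hmono (k0+j) k' hk'1
    have h2 := hk0.1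
    have h3 := hk'2.2
    rw [hsub]
    linarith
  calc μ {ω | (j:ℝ≥0∞) < W ξ a ω} ≤ μ (⋃ k, Ak ξ a k ∩ Dk ξ k j) :=
        measure_mono_ae hincl
    _ ≤ ∑' k : ℕ, μ (Ak ξ a k ∩ Dk ξ k j) := measure_iUnion_le _
    _ = ∑' k : ℕ, μ (Ak ξ a k) * μ (Dk ξ k j) :=
        tsum_congr fun k => measure_Ak_inter_Dk hmeas hindep a k j
    _ ≤ ∑' k : ℕ, μ (Ak ξ a k) *
          (ENNReal.ofReal (Real.exp s) * ENNReal.ofReal (mgf (ξ 0) μ (-s)) ^ j) := by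
        refine ENNReal.tsum_le_tsum fun k => mul_le_mul_right ?_ _
        have hch := chernoff hmeas hpos hindep hid hs (Finset.Ico k (k+j))
        rw [Nat.card_Ico, Nat.add_sub_cancel_left] at hch
        exact hch
    _ = (∑' k : ℕ, μ (Ak ξ a k)) *
          (ENNReal.ofReal (Real.exp s) * ENNReal.ofReal (mgf (ξ 0) μ (-s)) ^ j) :=
        ENNReal.tsum_mul_right
    _ ≤ 1 * (ENNReal.ofReal (Real.exp s) * ENNReal.ofReal (mgf (ξ 0) μ (-s)) ^ j) := by
        refine mul_le_mul_left ?_ _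
        rw [← measure_iUnion (Ak_disj a) (fun k => Ak_meas hmeas a k)]
        exact prob_le_one
    _ = _ := one_mul _

lemma moment_bound (hmeas : ∀ i, Measurable (ξ i)) (hpos : ∀ i, ∀ᵐ ω ∂μ, 0 < ξ i ω)
    (hindep : iIndepFun ξ μ)
    (hid : ∀ i, IdentDistrib (ξ i) (ξ 0) μ μ)
    (l : ℕ) (hl : 1 ≤ l) {s : ℝ} (hs : 0 < s) (a : ℝ) :
    ∫⁻ ω, (W ξ a ω)^l ∂μ ≤
      ENNReal.ofReal (Real.exp s) *
        ∑' j : ℕ, ((j:ℝ≥0∞)+1)^l * ENNReal.ofReal (mgf (ξ 0) μ (-s)) ^ j := by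
  set r := ENNReal.ofReal (mgf (ξ 0) μ (-s)) with hr
  set E := ENNReal.ofReal (Real.exp s) with hE
  have hsetmeas : ∀ j : ℕ, MeasurableSet {ω | (j:ℝ≥0∞) < W ξ a ω} :=
    fun j => measurableSet_lt measurable_const (W_meas hmeas a)
  have hitemeas : ∀ j : ℕ,
      Measurable (fun ω => if (j:ℝ≥0∞) < W ξ a ω then (1:ℝ≥0∞) else 0) :=
    fun j => Measurable.ite (hsetmeas j) measurable_const measurable_const
  calc ∫⁻ ω, (W ξ a ω)^l ∂μ
      ≤ ∫⁻ ω, ∑' j:ℕ, (((j+1)^l - j^l : ℕ):ℝ≥0∞) *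
          (if (j:ℝ≥0∞) < W ξ a ω then 1 else 0) ∂μ :=
        lintegral_mono fun ω => pow_le_tsum_layer l hl _
    _ = ∑' j:ℕ, ∫⁻ ω, (((j+1)^l - j^l : ℕ):ℝ≥0∞) *
          (if (j:ℝ≥0∞) < W ξ a ω then 1 else 0) ∂μ :=
        lintegral_tsum fun j => (measurable_const.mul (hitemeas j)).aemeasurable
    _ = ∑' j:ℕ, (((j+1)^l - j^l : ℕ):ℝ≥0∞) * μ {ω | (j:ℝ≥0∞) < W ξ a ω} := by
        refine tsum_congr fun j => ?_
        rw [lintegral_const_mul _ (hitemeas j)]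
        congr 1
        have hind : (fun ω => if (j:ℝ≥0∞) < W ξ a ω then (1:ℝ≥0∞) else 0)
            = Set.indicator {ω | (j:ℝ≥0∞) < W ξ a ω} (fun _ => (1:ℝ≥0∞)) := by
          ext ω
          simp [Set.indicator_apply]
        rw [hind, lintegral_indicator_const (hsetmeas j), one_mul]
    _ ≤ ∑' j:ℕ, ((j:ℝ≥0∞)+1)^l * (E * r ^ j) := by
        refine ENNReal.tsum_le_tsum fun j => ?_
        refine mul_le_mul' ?_ (tail_bound hmeas hpos hindep hid hs a j)
        calc (((j+1)^l - j^l : ℕ):ℝ≥0∞) ≤ (((j+1)^l : ℕ):ℝ≥0∞) := by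
              exact_mod_cast Nat.sub_le _ _
        _ = ((j:ℝ≥0∞)+1)^l := by push_cast; ring
    _ = E * ∑' j:ℕ, ((j:ℝ≥0∞)+1)^l * r ^ j := by
        rw [← ENNReal.tsum_mul_left]
        exact tsum_congr fun j => by ring

lemma const_lt_top (l : ℕ) {c : ℝ} (hc0 : 0 ≤ c) (hc1 : c < 1) :
    (∑' j:ℕ, ((j:ℝ≥0∞)+1)^l * ENNReal.ofReal c ^ j) ≠ ⊤ := by
  have hsum : Summable (fun j:ℕ => ((j:ℝ)+1)^l * c^j) := by
    have heq : ∀ j:ℕ, ((j:ℝ)+1)^l * c^j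
        = ∑ i ∈ Finset.range (l+1), ((j:ℝ)^i * c^j * (l.choose i : ℝ)) := by
      intro j
      rw [add_pow, Finset.sum_mul]
      exact Finset.sum_congr rfl fun i _ => by ring
    refine Summable.congr ?_ (fun j => (heq j).symm)
    refine summable_sum fun i _ => ?_
    have hbase := summable_pow_mul_geometric_of_norm_lt_one (R := ℝ) i
      (r := c) (by rwa [Real.norm_eq_abs, abs_of_nonneg hc0])
    exact hbase.mul_right _
  have hterm : ∀ j:ℕ, ((j:ℝ≥0∞)+1)^l * ENNReal.ofReal c ^ j
      = ENNReal.ofReal (((j:ℝ)+1)^l * c^j) := by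
    intro j
    rw [ENNReal.ofReal_mul (by positivity), ENNReal.ofReal_pow (by positivity),
      ENNReal.ofReal_pow hc0]
    congr 2
    rw [ENNReal.ofReal_add (Nat.cast_nonneg j) zero_le_one, ENNReal.ofReal_natCast,
      ENNReal.ofReal_one]
  rw [tsum_congr hterm, ← ENNReal.ofReal_tsum_of_nonneg (fun j => by positivity) hsum]
  exact ENNReal.ofReal_ne_top


end ShotAux

theorem stmt_7 {Ω : Type*} [MeasurableSpace Ω] (μ : Measure Ω) [IsProbabilityMeasure μ]
    (ξ : ℕ → Ω → ℝ) (hmeas : ∀ i, Measurable (ξ i))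
    (hpos : ∀ i, ∀ᵐ ω ∂μ, 0 < ξ i ω)
    (hindep : iIndepFun ξ μ)
    (hid : ∀ i, IdentDistrib (ξ i) (ξ 0) μ μ)
    (G : ℝ → ℝ) (hG0 : ∀ x, 0 ≤ G x)
    (hGloc : ∀ b : ℝ, 0 ≤ b → ∃ M : ℝ, ∀ x ∈ Icc 0 b, G x ≤ M)
    (hGanti : AntitoneOn G (Ici 0))
    (l : ℕ) (hl : 1 ≤ l) :
    ∃ C : ℝ, ∃ t₀ : ℝ, ∀ t : ℝ, t₀ ≤ t →
      (∫⁻ ω, (shotSum G ξ t ω) ^ l ∂μ)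
        ≤ ENNReal.ofReal (C * ((∫ y in (0:ℝ)..t, G y) + 1) ^ l) := by
  classical
  obtain ⟨s, hs, hr1⟩ := ShotAux.exists_rate (μ := μ) hmeas hpos
  have hr0 : (0:ℝ) ≤ mgf (ξ 0) μ (-s) := mgf_nonneg
  set K : ℝ≥0∞ := ENNReal.ofReal (Real.exp s) *
      ∑' j : ℕ, ((j:ℝ≥0∞)+1)^l * ENNReal.ofReal (mgf (ξ 0) μ (-s)) ^ j with hK
  have hKtop : K ≠ ⊤ :=
    ENNReal.mul_ne_top ENNReal.ofReal_ne_top (ShotAux.const_lt_top l hr0 hr1)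
  have hmom : ∀ a : ℝ, ∫⁻ ω, (ShotAux.W ξ a ω)^l ∂μ ≤ K :=
    fun a => ShotAux.moment_bound hmeas hpos hindep hid l hl hs a
  set c := K.toReal with hc
  have hKc : K = ENNReal.ofReal c := (ENNReal.ofReal_toReal hKtop).symm
  have hc0 : 0 ≤ c := ENNReal.toReal_nonneg
  refine ⟨c * (G 0 + 1)^l, 0, fun t ht => ?_⟩
  set N := ⌊t⌋₊ with hN
  set I : ℝ := ∫ y in (0:ℝ)..t, G y with hI
  have hI0 : 0 ≤ I :=
    intervalIntegral.integral_nonneg ht (fun y _ => hG0 y)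
  have hNt : (N:ℝ) ≤ t := Nat.floor_le ht
  have hGint : IntegrableOn G (Set.Icc 0 t) volume :=
    AntitoneOn.integrableOn_isCompact isCompact_Icc (hGanti.mono Set.Icc_subset_Ici_self)
  have hII : ∀ u v : ℝ, 0 ≤ u → 0 ≤ v → u ≤ t → v ≤ t →
      IntervalIntegrable G volume u v := by
    intro u v h0u h0v hut hvt
    rw [intervalIntegrable_iff]
    refine hGint.mono_set ?_
    intro y hy
    rcases hy with ⟨hy1, hy2⟩
    exact ⟨le_of_lt (lt_of_le_of_lt (le_min h0u h0v) hy1), hy2.trans (max_le hut hvt)⟩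
  have hP : ∀ᵐ ω ∂μ, ∀ i, 0 < ξ i ω := ae_all_iff.mpr hpos
  -- Step A: pointwise bound
  have hstepA : ∀ᵐ ω ∂μ, shotSum G ξ t ω ≤
      ∑ n ∈ Finset.range (N+1), ENNReal.ofReal (G n) * ShotAux.W ξ (t - ((n:ℝ)+1)) ω := by
    filter_upwards [hP] with ω hω
    have hS0 : ∀ k, 0 ≤ partialSum ξ k ω :=
      fun k => Finset.sum_nonneg fun i _ => (hω i).le
    have hterm : ∀ k : ℕ,
        ENNReal.ofReal (if partialSum ξ k ω ≤ t then G (t - partialSum ξ k ω) else 0)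
        ≤ ∑ n ∈ Finset.range (N+1), ENNReal.ofReal (G n) *
            (if partialSum ξ k ω ∈ Set.Ioc (t - ((n:ℝ)+1)) (t - ((n:ℝ)+1) + 1)
              then (1:ℝ≥0∞) else 0) := by
      intro k
      by_cases hk : partialSum ξ k ω ≤ t
      · rw [if_pos hk]
        set x := t - partialSum ξ k ω with hx
        have hx0 : 0 ≤ x := by simp only [hx]; linarith
        set n := ⌊x⌋₊ with hn
        have hxt : x ≤ t := by have := hS0 k; simp only [hx]; linarith
        have hnle : n ≤ N := Nat.floor_le_floor hxt
        have h1 : (n:ℝ) ≤ x := Nat.floor_le hx0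
        have h2 : x < n + 1 := Nat.lt_floor_add_one x
        have hmem : partialSum ξ k ω ∈ Set.Ioc (t - ((n:ℝ)+1)) (t - ((n:ℝ)+1) + 1) := by
          constructor
          · linarith
          · linarith
        have hGle : G x ≤ G n :=
          hGanti (Set.mem_Ici.mpr (Nat.cast_nonneg n)) (Set.mem_Ici.mpr hx0) h1
        calc ENNReal.ofReal (G x)
            ≤ ENNReal.ofReal (G n) *
              (if partialSum ξ k ω ∈ Set.Ioc (t - ((n:ℝ)+1)) (t - ((n:ℝ)+1) + 1)
                then (1:ℝ≥0∞) else 0) := by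
              rw [if_pos hmem, mul_one]
              exact ENNReal.ofReal_le_ofReal hGle
          _ ≤ _ := Finset.single_le_sum
              (f := fun m : ℕ => ENNReal.ofReal (G m) *
                (if partialSum ξ k ω ∈ Set.Ioc (t - ((m:ℝ)+1)) (t - ((m:ℝ)+1) + 1)
                  then (1:ℝ≥0∞) else 0))
              (fun m _ => zero_le) (Finset.mem_range.mpr (by omega))
      · rw [if_neg hk, ENNReal.ofReal_zero]
        exact zero_le
    calc shotSum G ξ t ω
        ≤ ∑' k : ℕ, ∑ n ∈ Finset.range (N+1), ENNReal.ofReal (G n) *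
            (if partialSum ξ k ω ∈ Set.Ioc (t - ((n:ℝ)+1)) (t - ((n:ℝ)+1) + 1)
              then (1:ℝ≥0∞) else 0) := ENNReal.tsum_le_tsum hterm
      _ = ∑ n ∈ Finset.range (N+1), ∑' k : ℕ, ENNReal.ofReal (G n) *
            (if partialSum ξ k ω ∈ Set.Ioc (t - ((n:ℝ)+1)) (t - ((n:ℝ)+1) + 1)
              then (1:ℝ≥0∞) else 0) := Summable.tsum_finsetSum (fun _ _ => ENNReal.summable)
      _ = ∑ n ∈ Finset.range (N+1), ENNReal.ofReal (G n) * ShotAux.W ξ (t - ((n:ℝ)+1)) ω := by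
          refine Finset.sum_congr rfl fun n _ => ?_
          rw [ShotAux.W, ENNReal.tsum_mul_left]
  -- Step B+C
  set A := ∑ n ∈ Finset.range (N+1), ENNReal.ofReal (G n) with hA
  have hWmeas : ∀ n : ℕ, Measurable (ShotAux.W ξ (t - ((n:ℝ)+1))) :=
    fun n => ShotAux.W_meas hmeas _
  have hmain : (∫⁻ ω, (shotSum G ξ t ω)^l ∂μ) ≤ A^l * K := by
    calc ∫⁻ ω, (shotSum G ξ t ω)^l ∂μ
        ≤ ∫⁻ ω, A^(l-1) * ∑ n ∈ Finset.range (N+1),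
            ENNReal.ofReal (G n) * (ShotAux.W ξ (t - ((n:ℝ)+1)) ω)^l ∂μ := by
          refine lintegral_mono_ae ?_
          filter_upwards [hstepA] with ω hω
          rw [hA]
          refine le_trans ?_ (ShotAux.hoelder_sum (Finset.range (N+1)) (fun n => ENNReal.ofReal (G n))
            (fun n => ShotAux.W ξ (t - ((n:ℝ)+1)) ω) (fun n _ => ENNReal.ofReal_ne_top) l hl)
          gcongr
      _ = A^(l-1) * ∑ n ∈ Finset.range (N+1),
            ENNReal.ofReal (G n) * ∫⁻ ω, (ShotAux.W ξ (t - ((n:ℝ)+1)) ω)^l ∂μ := by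
          rw [lintegral_const_mul _
            (Finset.measurable_sum (f := fun (n : ℕ) ω => ENNReal.ofReal (G n) * (ShotAux.W ξ (t - ((n:ℝ)+1)) ω)^l) _ fun n _ => measurable_const.mul ((hWmeas n).pow_const l))]
          congr 1
          rw [lintegral_finset_sum (f := fun (n : ℕ) ω => ENNReal.ofReal (G n) * (ShotAux.W ξ (t - ((n:ℝ)+1)) ω)^l) _
            (fun n _ => measurable_const.mul ((hWmeas n).pow_const l))]
          exact Finset.sum_congr rfl fun n _ =>
            lintegral_const_mul _ ((hWmeas n).pow_const l)
      _ ≤ A^(l-1) * ∑ n ∈ Finset.range (N+1), ENNReal.ofReal (G n) * K := by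
          gcongr with n hn
          exact hmom _
      _ = A^(l-1) * (A * K) := by rw [hA, Finset.sum_mul]
      _ = A^l * K := by
          rw [← mul_assoc, ← pow_succ, Nat.sub_add_cancel hl]
  -- Bounding A
  have hGn : ∀ n : ℕ, n < N → G ((n:ℝ)+1) ≤ ∫ y in (n:ℝ)..((n:ℝ)+1), G y := by
    intro n hn
    have hn1t : ((n:ℝ)+1) ≤ t := by
      have : (n:ℝ)+1 ≤ N := by exact_mod_cast Nat.succ_le_of_lt hn
      linarith
    have hseg : IntegrableOn G (Set.Ioc (n:ℝ) ((n:ℝ)+1)) volume := by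
      refine hGint.mono_set ?_
      intro y hy
      exact ⟨le_of_lt (lt_of_le_of_lt (Nat.cast_nonneg n) hy.1), hy.2.trans hn1t⟩
    rw [intervalIntegral.integral_of_le (by linarith : (n:ℝ) ≤ (n:ℝ)+1)]
    have hconst := setIntegral_ge_of_const_le (μ := volume) (c := G ((n:ℝ)+1))
      measurableSet_Ioc (by simp [Real.volume_Ioc])
      (fun y hy => hGanti (Set.mem_Ici.mpr (le_of_lt (lt_of_le_of_lt (Nat.cast_nonneg n) hy.1)))
        (Set.mem_Ici.mpr (by positivity)) hy.2) hseg
    have hvol : (volume (Set.Ioc (n:ℝ) ((n:ℝ)+1))).toReal = 1 := by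
      simp [Real.volume_Ioc]
    rw [measureReal_def, hvol, one_smul] at hconst
    exact hconst
  have hsumG : ∑ n ∈ Finset.range N, G ((n:ℝ)+1) ≤ I := by
    have h1 : ∑ n ∈ Finset.range N, G ((n:ℝ)+1)
        ≤ ∑ n ∈ Finset.range N, ∫ y in (n:ℝ)..((n:ℝ)+1), G y :=
      Finset.sum_le_sum (fun n hn => hGn n (Finset.mem_range.mp hn))
    have h2 : ∑ n ∈ Finset.range N, ∫ y in (n:ℝ)..((n:ℝ)+1), G y
        = ∫ y in (0:ℝ)..(N:ℝ), G y := by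
      have hint : ∀ k < N, IntervalIntegrable G volume ((k:ℕ):ℝ) ((k+1:ℕ):ℝ) := by
        intro k hk
        refine hII _ _ (Nat.cast_nonneg k) (Nat.cast_nonneg (k+1)) ?_ ?_
        · exact le_trans (by exact_mod_cast Nat.le_of_lt hk) hNt
        · exact le_trans (by exact_mod_cast Nat.succ_le_of_lt hk) hNt
      have := intervalIntegral.sum_integral_adjacent_intervals
        (a := fun k : ℕ => (k:ℝ)) (n := N) (f := G) (μ := volume) hint
      push_cast at this
      exact this
    have h3 : (∫ y in (0:ℝ)..(N:ℝ), G y) ≤ I := by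
      rw [hI]
      refine intervalIntegral.integral_mono_interval le_rfl (Nat.cast_nonneg N) hNt ?_ ?_
      · exact Filter.Eventually.of_forall fun y => hG0 y
      · exact hII 0 t le_rfl ht ht le_rfl
    linarith
  have hAle : A ≤ ENNReal.ofReal ((G 0 + 1) * (I + 1)) := by
    have h0 : A = (∑ n ∈ Finset.range N, ENNReal.ofReal (G ((n+1:ℕ)))) +
        ENNReal.ofReal (G ((0:ℕ):ℝ)) := by
      rw [hA, Finset.sum_range_succ']
    have h1 : (∑ n ∈ Finset.range N, ENNReal.ofReal (G ((n+1:ℕ))))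
        = ENNReal.ofReal (∑ n ∈ Finset.range N, G ((n:ℝ)+1)) := by
      rw [ENNReal.ofReal_sum_of_nonneg (fun n _ => hG0 _)]
      refine Finset.sum_congr rfl fun n _ => ?_
      congr 2
      push_cast
      ring
    calc A = ENNReal.ofReal (∑ n ∈ Finset.range N, G ((n:ℝ)+1)) +
          ENNReal.ofReal (G ((0:ℕ):ℝ)) := by rw [h0, h1]
      _ ≤ ENNReal.ofReal I + ENNReal.ofReal (G 0) := by
          refine add_le_add (ENNReal.ofReal_le_ofReal hsumG) (le_of_eq ?_)
          norm_num
      _ = ENNReal.ofReal (I + G 0) := (ENNReal.ofReal_add hI0 (hG0 0)).symm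
      _ ≤ ENNReal.ofReal ((G 0 + 1) * (I + 1)) :=
          ENNReal.ofReal_le_ofReal (by nlinarith [hG0 0, hI0])
  have hb : 0 ≤ (G 0 + 1) * (I + 1) := mul_nonneg (by linarith [hG0 0]) (by linarith)
  have hfinal : A^l * K ≤ ENNReal.ofReal (c * (G 0 + 1)^l * (I + 1)^l) := by
    calc A^l * K ≤ (ENNReal.ofReal ((G 0 + 1) * (I + 1)))^l * ENNReal.ofReal c := by
          rw [hKc]
          gcongr
      _ = ENNReal.ofReal (((G 0 + 1) * (I + 1))^l * c) := by
          rw [← ENNReal.ofReal_pow hb, ← ENNReal.ofReal_mul (pow_nonneg hb l)]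
      _ = ENNReal.ofReal (c * (G 0 + 1)^l * (I + 1)^l) := by
          congr 1
          rw [mul_pow]
          ring
  exact hmain.trans hfinal
end

section
/- Let ξ₁, ξ₂, … be i.i.d. strictly positive random variables with partial sums Sₙ, let ν(t) = #{k ≥ 0 : S_k ≤ t}, and let G : [0,∞) → [0,∞) be locally bounded. Then for every integer l ≥ 1, E[(Σ_{k≥0} G(t - S_k) 1{S_k ≤ t})^l] ≤ E[ν(1)^l] · (Σ_{j=0}^{⌊t⌋} sup_{y ∈ [j, j+1)} G(y))^l for all t ≥ 0. -/
open MeasureTheory ProbabilityTheory Filter Set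
open scoped ENNReal

/-- `ν(t) = #{k ≥ 0 : S_k ≤ t}`, as an `ℝ≥0∞`-valued count. -/
noncomputable def renewalCount {Ω : Type*} (ξ : ℕ → Ω → ℝ) (t : ℝ) (ω : Ω) : ℝ≥0∞ :=
  ∑' k : ℕ, if partialSum ξ k ω ≤ t then (1 : ℝ≥0∞) else 0

lemma measurable_partialSum {Ω : Type*} [MeasurableSpace Ω] (ξ : ℕ → Ω → ℝ)
    (hmeas : ∀ i, Measurable (ξ i)) (n : ℕ) : Measurable (partialSum ξ n) :=
  Finset.measurable_sum _ (fun i _ => hmeas i)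

lemma filter_range_lt (K m : ℕ) (h : m ≤ K) :
    (Finset.range K).filter (· < m) = Finset.range m := by
  ext i; simp only [Finset.mem_filter, Finset.mem_range]; omega

-- sum over subtype-filter equals plain range sum
lemma sum_sub_lt (n m : ℕ) (hm : m ≤ n) (y : ℕ → ℝ) :
    (∑ i ∈ Finset.univ.filter (fun i : (Finset.range n : Finset ℕ) => (i : ℕ) < m), y (i : ℕ))
      = ∑ i ∈ Finset.range m, y i := by
  classical
  rw [Finset.sum_filter, Finset.sum_coe_sort (Finset.range n) (fun i => if i < m then y i else 0),
    ← Finset.sum_filter, filter_range_lt n m hm]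

lemma sum_Ico_sub (n K m : ℕ) (hm : m ≤ K) (y : ℕ → ℝ) :
    (∑ i ∈ Finset.univ.filter (fun i : (Finset.Ico n (n + K) : Finset ℕ) => (i : ℕ) < n + m),
      y (i : ℕ)) = ∑ i ∈ Finset.range m, y (n + i) := by
  classical
  rw [Finset.sum_filter,
    Finset.sum_coe_sort (Finset.Ico n (n + K)) (fun i => if i < n + m then y i else 0),
    ← Finset.sum_filter]
  have h1 : (Finset.Ico n (n + K)).filter (· < n + m) = Finset.Ico n (n + m) := by
    ext i; simp only [Finset.mem_filter, Finset.mem_Ico]; omega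
  rw [h1, Finset.sum_Ico_eq_sum_range]
  simp

lemma iSup_pow_mono {f : ℕ → ℝ≥0∞} (hf : Monotone f) (l : ℕ) :
    (⨆ K, f K) ^ l = ⨆ K, f K ^ l := by
  have h1 : Tendsto (fun K => f K ^ l) atTop (nhds ((⨆ K, f K) ^ l)) :=
    ((ENNReal.continuous_pow l).tendsto _).comp (tendsto_atTop_iSup hf)
  have h2 : Tendsto (fun K => f K ^ l) atTop (nhds (⨆ K, f K ^ l)) :=
    tendsto_atTop_iSup (fun a b hab => pow_le_pow_left' (hf hab) l)
  exact tendsto_nhds_unique h1 h2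

lemma map_vec_eq_pi {Ω : Type*} [MeasurableSpace Ω] (μ : Measure Ω) [IsProbabilityMeasure μ]
    (ξ : ℕ → Ω → ℝ) (hmeas : ∀ i, Measurable (ξ i))
    (hindep : iIndepFun ξ μ)
    {K : ℕ} (σ : Fin K → ℕ) (hσ : Function.Injective σ) :
    μ.map (fun ω (i : Fin K) => ξ (σ i) ω) = Measure.pi (fun i => μ.map (ξ (σ i))) := by
  have hm : Measurable (fun ω (i : Fin K) => ξ (σ i) ω) :=
    measurable_pi_lambda _ fun i => hmeas (σ i)
  have hprob : ∀ i : Fin K, IsProbabilityMeasure (μ.map (ξ (σ i))) :=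
    fun i => Measure.isProbabilityMeasure_map (hmeas (σ i)).aemeasurable
  refine (Measure.pi_eq fun s hs => ?_).symm
  rw [Measure.map_apply hm (MeasurableSet.univ_pi hs)]
  classical
  set sets : ℕ → Set ℝ := fun k => if h : ∃ i, σ i = k then s h.choose else Set.univ with hsets_def
  have hsets : ∀ i : Fin K, sets (σ i) = s i := by
    intro i
    have he : ∃ j, σ j = σ i := ⟨i, rfl⟩
    have : he.choose = i := hσ he.choose_spec
    simp [hsets_def, dif_pos he, this]
  have hpre : (fun ω (i : Fin K) => ξ (σ i) ω) ⁻¹' (Set.pi Set.univ s)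
      = ⋂ k ∈ Finset.image σ Finset.univ, ξ k ⁻¹' sets k := by
    ext ω
    simp only [Set.mem_preimage, Set.mem_pi, Set.mem_univ, forall_true_left, Set.mem_iInter,
      Finset.mem_image, Finset.mem_univ, true_and]
    constructor
    · rintro h k ⟨i, rfl⟩; rw [hsets]; exact h i
    · intro h i; rw [← hsets]; exact h (σ i) ⟨i, rfl⟩
  rw [hpre, hindep.measure_inter_preimage_eq_mul (Finset.image σ Finset.univ)
      (fun k hk => ?_)]
  · rw [Finset.prod_image (fun i _ j _ h => hσ h)]
    refine Finset.prod_congr rfl fun i _ => ?_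
    rw [hsets, Measure.map_apply (hmeas (σ i)) (hs i)]
  · simp only [Finset.mem_image, Finset.mem_univ, true_and] at hk
    obtain ⟨i, rfl⟩ := hk
    rw [hsets]; exact hs i

lemma identDistrib_shift {Ω : Type*} [MeasurableSpace Ω] (μ : Measure Ω) [IsProbabilityMeasure μ]
    (ξ : ℕ → Ω → ℝ) (hmeas : ∀ i, Measurable (ξ i))
    (hindep : iIndepFun ξ μ)
    (hid : ∀ i, IdentDistrib (ξ i) (ξ 0) μ μ) (n K : ℕ) :
    IdentDistrib (fun ω (i : Fin K) => ξ (n + i) ω) (fun ω (i : Fin K) => ξ (i : ℕ) ω) μ μ := by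
  refine ⟨(measurable_pi_lambda _ fun i => hmeas _).aemeasurable,
    (measurable_pi_lambda _ fun i => hmeas _).aemeasurable, ?_⟩
  rw [map_vec_eq_pi μ ξ hmeas hindep (fun i : Fin K => n + (i : ℕ))
        (fun i j h => by simpa [Fin.val_eq_val] using Nat.add_left_cancel h),
      map_vec_eq_pi μ ξ hmeas hindep (fun i : Fin K => (i : ℕ)) Fin.val_injective]
  congr 1
  funext i
  rw [(hid (n + i)).map_eq, (hid i).map_eq]

lemma sum_fin_lt (K m : ℕ) (hm : m ≤ K) (y : ℕ → ℝ) :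
    (∑ i ∈ Finset.univ.filter (fun i : Fin K => (i : ℕ) < m), y (i : ℕ))
      = ∑ i ∈ Finset.range m, y i := by
  classical
  rw [Finset.sum_filter, Fin.sum_univ_eq_sum_range (fun i => if i < m then y i else 0) K,
    ← Finset.sum_filter, filter_range_lt K m hm]


section AuxDefs

noncomputable def phiAux (n : ℕ) (a : ℝ) : ({x // x ∈ Finset.range n} → ℝ) → ℝ≥0∞ := fun x =>
  if (a < ∑ i ∈ Finset.univ.filter (fun i : {x // x ∈ Finset.range n} => (i : ℕ) < n), x i ∧
      ∀ j ∈ Finset.range n,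
        (∑ i ∈ Finset.univ.filter (fun i : {x // x ∈ Finset.range n} => (i : ℕ) < j), x i) ≤ a)
  then 1 else 0

noncomputable def psiAux (n K l : ℕ) : ({x // x ∈ Finset.Ico n (n + K)} → ℝ) → ℝ≥0∞ := fun x =>
  (∑ m ∈ Finset.range K,
    if (∑ i ∈ Finset.univ.filter
          (fun i : {x // x ∈ Finset.Ico n (n + K)} => (i : ℕ) < n + m), x i) ≤ 1
    then (1:ℝ≥0∞) else 0) ^ l

noncomputable def gAux (K l : ℕ) : (Fin K → ℝ) → ℝ≥0∞ := fun x =>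
  (∑ m ∈ Finset.range K,
    if (∑ i ∈ Finset.univ.filter (fun i : Fin K => (i : ℕ) < m), x i) ≤ 1
    then (1:ℝ≥0∞) else 0) ^ l

lemma phiAux_meas (n : ℕ) (a : ℝ) : Measurable (phiAux n a) := by
  classical
  refine Measurable.ite ?_ measurable_const measurable_const
  have : {x : ({x // x ∈ Finset.range n} → ℝ) |
      a < (∑ i ∈ Finset.univ.filter (fun i : {x // x ∈ Finset.range n} => (i : ℕ) < n), x i) ∧
      ∀ j ∈ Finset.range n,
        (∑ i ∈ Finset.univ.filter (fun i : {x // x ∈ Finset.range n} => (i : ℕ) < j), x i) ≤ a}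
      = {x | a < (∑ i ∈ Finset.univ.filter
            (fun i : {x // x ∈ Finset.range n} => (i : ℕ) < n), x i)}
        ∩ ⋂ j ∈ Finset.range n,
          {x | (∑ i ∈ Finset.univ.filter
              (fun i : {x // x ∈ Finset.range n} => (i : ℕ) < j), x i) ≤ a} := by
    ext x; simp
  rw [this]
  exact (measurableSet_lt measurable_const
      (Finset.measurable_sum _ fun i _ => measurable_pi_apply i)).inter
    (MeasurableSet.biInter (Finset.range n : Finset ℕ).countable_toSet fun j _ =>
      measurableSet_le (Finset.measurable_sum _ fun i _ => measurable_pi_apply i)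
        measurable_const)

lemma psiAux_meas (n K l : ℕ) : Measurable (psiAux n K l) := by
  refine Measurable.pow_const ?_ l
  refine Finset.measurable_sum _ fun m _ => ?_
  exact Measurable.ite
    (measurableSet_le (Finset.measurable_sum _ fun i _ => measurable_pi_apply i)
      measurable_const) measurable_const measurable_const

lemma gAux_meas (K l : ℕ) : Measurable (gAux K l) := by
  refine Measurable.pow_const ?_ l
  refine Finset.measurable_sum _ fun m _ => ?_
  exact Measurable.ite
    (measurableSet_le (Finset.measurable_sum _ fun i _ => measurable_pi_apply i)
      measurable_const) measurable_const measurable_const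

lemma psiAux_apply {Ω : Type*} (ξ : ℕ → Ω → ℝ) (n K l : ℕ) (ω : Ω) :
    psiAux n K l (fun i : {x // x ∈ Finset.Ico n (n + K)} => ξ (i : ℕ) ω)
      = (∑ m ∈ Finset.range K,
          if (∑ i ∈ Finset.range m, ξ (n + i) ω) ≤ 1 then (1:ℝ≥0∞) else 0) ^ l := by
  unfold psiAux
  congr 1
  refine Finset.sum_congr rfl fun m hm => ?_
  rw [sum_Ico_sub n K m (le_of_lt (Finset.mem_range.1 hm)) (fun i => ξ i ω)]

lemma gAux_apply {Ω : Type*} (y : ℕ → ℝ) (K l : ℕ) :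
    gAux K l (fun i : Fin K => y (i : ℕ))
      = (∑ m ∈ Finset.range K,
          if (∑ i ∈ Finset.range m, y i) ≤ 1 then (1:ℝ≥0∞) else 0) ^ l := by
  unfold gAux
  congr 1
  refine Finset.sum_congr rfl fun m hm => ?_
  rw [sum_fin_lt K m (le_of_lt (Finset.mem_range.1 hm)) y]

end AuxDefs

lemma key_dom {Ω : Type*} [MeasurableSpace Ω] (μ : Measure Ω) [IsProbabilityMeasure μ]
    (ξ : ℕ → Ω → ℝ) (hmeas : ∀ i, Measurable (ξ i))
    (hindep : iIndepFun ξ μ)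
    (hid : ∀ i, IdentDistrib (ξ i) (ξ 0) μ μ)
    (l : ℕ) (hl : 1 ≤ l) (a b : ℝ) (hab : b ≤ a + 1) :
    ∫⁻ ω, (∑' k, if a < partialSum ξ k ω ∧ partialSum ξ k ω ≤ b then (1:ℝ≥0∞) else 0) ^ l ∂μ
      ≤ ∫⁻ ω, (renewalCount ξ 1 ω) ^ l ∂μ := by
  classical
  set I := ∫⁻ ω, (renewalCount ξ 1 ω) ^ l ∂μ with hI
  have hS := measurable_partialSum ξ hmeas
  set C : Ω → ℝ≥0∞ := fun ω =>
    ∑' k, if a < partialSum ξ k ω ∧ partialSum ξ k ω ≤ b then (1:ℝ≥0∞) else 0 with hC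
  set E : ℕ → Set Ω := fun n =>
    {ω | a < partialSum ξ n ω} ∩ ⋂ j ∈ Finset.range n, {ω | partialSum ξ j ω ≤ a} with hE
  have hEmeas : ∀ n, MeasurableSet (E n) := by
    intro n
    exact (measurableSet_lt measurable_const (hS n)).inter
      (MeasurableSet.biInter (Finset.range n : Finset ℕ).countable_toSet
        (fun j _ => measurableSet_le (hS j) measurable_const))
  have hEmem : ∀ n ω, ω ∈ E n ↔ (a < partialSum ξ n ω ∧ ∀ j < n, partialSum ξ j ω ≤ a) := by
    intro n ω
    simp [hE, Set.mem_iInter, Finset.mem_range]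
  have hdisj : Pairwise (Function.onFun Disjoint E) := by
    have key : ∀ n m, n < m → Disjoint (E n) (E m) := by
      intro n m h
      refine Set.disjoint_left.2 fun ω hn hm => ?_
      exact absurd (((hEmem m ω).1 hm).2 n h) (not_le.2 ((hEmem n ω).1 hn).1)
    intro n m hnm
    rcases lt_or_gt_of_ne hnm with h | h
    · exact key n m h
    · exact (key m n h).symm
  have hCzero : ∀ ω, ω ∉ (⋃ n, E n) → C ω = 0 := by
    intro ω hω
    have hno : ∀ k, ¬ a < partialSum ξ k ω := by
      intro k hk
      have hex : ∃ k, a < partialSum ξ k ω := ⟨k, hk⟩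
      refine hω (Set.mem_iUnion.2 ⟨Nat.find hex, (hEmem _ ω).2
        ⟨Nat.find_spec hex, fun j hj => not_lt.1 (Nat.find_min hex hj)⟩⟩)
    rw [hC]
    convert tsum_zero with k
    simp [hno k]
  have hU : MeasurableSet (⋃ n, E n) := MeasurableSet.iUnion hEmeas
  have hlne : l ≠ 0 := by omega
  have hsplit : ∫⁻ ω, C ω ^ l ∂μ = ∑' n, ∫⁻ ω in E n, C ω ^ l ∂μ := by
    rw [← lintegral_iUnion hEmeas hdisj, ← lintegral_add_compl (fun ω => C ω ^ l) hU]
    have h0 : ∫⁻ ω in (⋃ n, E n)ᶜ, C ω ^ l ∂μ = 0 := by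
      have : ∀ᵐ ω ∂(μ.restrict (⋃ n, E n)ᶜ), C ω ^ l = 0 := by
        refine (ae_restrict_iff' hU.compl).2 (ae_of_all _ fun ω hω => ?_)
        rw [hCzero ω hω, zero_pow hlne]
      rw [lintegral_congr_ae this, lintegral_zero]
    rw [h0, add_zero]
  have hbound : ∀ n, ∫⁻ ω in E n, C ω ^ l ∂μ ≤ μ (E n) * I := by
    intro n
    set ν : ℕ → Ω → ℝ≥0∞ := fun K ω =>
      ∑ m ∈ Finset.range K,
        if (∑ i ∈ Finset.range m, ξ (n + i) ω) ≤ 1 then (1:ℝ≥0∞) else 0 with hν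
    have hνmeas : ∀ K, Measurable (ν K) := by
      intro K
      refine Finset.measurable_sum _ (fun m _ => ?_)
      exact Measurable.ite
        (measurableSet_le (Finset.measurable_sum _ fun i _ => hmeas _) measurable_const)
        measurable_const measurable_const
    have hνmono : ∀ ω, Monotone fun K => ν K ω := fun ω K1 K2 h =>
      Finset.sum_le_sum_of_subset (Finset.range_subset_range.2 h)
    have hpath : ∀ ω ∈ E n, C ω ≤ ⨆ K, ν K ω := by
      intro ω hω
      obtain ⟨h1, h2⟩ := (hEmem n ω).1 hω
      have heq : C ω = ∑' m, if a < partialSum ξ (n + m) ω ∧ partialSum ξ (n + m) ω ≤ b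
          then (1:ℝ≥0∞) else 0 := by
        refine (Function.Injective.tsum_eq (g := fun m => n + m)
          (fun x y h => Nat.add_left_cancel h) ?_).symm
        intro k hk
        simp only [Function.mem_support] at hk
        by_cases hcond : a < partialSum ξ k ω ∧ partialSum ξ k ω ≤ b
        · have hkn : n ≤ k := by
            by_contra hlt
            exact absurd (h2 k (by omega)) (not_le.2 hcond.1)
          exact ⟨k - n, Nat.add_sub_cancel' hkn⟩
        · simp [hcond] at hk
      calc C ω = _ := heq
        _ ≤ ∑' m, if (∑ i ∈ Finset.range m, ξ (n + i) ω) ≤ 1 then (1:ℝ≥0∞) else 0 := by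
            refine ENNReal.tsum_le_tsum fun m => ?_
            by_cases hcond : a < partialSum ξ (n + m) ω ∧ partialSum ξ (n + m) ω ≤ b
            · have hsum : partialSum ξ (n + m) ω
                  = partialSum ξ n ω + ∑ i ∈ Finset.range m, ξ (n + i) ω :=
                Finset.sum_range_add (fun i => ξ i ω) n m
              have hle : (∑ i ∈ Finset.range m, ξ (n + i) ω) ≤ 1 := by
                have h3 := hcond.1; have h4 := hcond.2; linarith
              simp [hcond, hle]
            · simp only [if_neg hcond]; exact zero_le
        _ = ⨆ K, ν K ω := ENNReal.tsum_eq_iSup_nat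
    have step1 : ∫⁻ ω in E n, C ω ^ l ∂μ ≤ ⨆ K, ∫⁻ ω in E n, (ν K ω) ^ l ∂μ := by
      have hmono : Monotone fun K => fun ω => (ν K ω) ^ l :=
        fun K1 K2 h ω => pow_le_pow_left' (hνmono ω h) l
      have h1 : ∫⁻ ω in E n, C ω ^ l ∂μ ≤ ∫⁻ ω in E n, (⨆ K, (ν K ω) ^ l) ∂μ := by
        refine lintegral_mono_ae ((ae_restrict_iff' (hEmeas n)).2 (ae_of_all _ fun ω hω => ?_))
        calc C ω ^ l ≤ (⨆ K, ν K ω) ^ l := pow_le_pow_left' (hpath ω hω) l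
          _ = ⨆ K, (ν K ω) ^ l := iSup_pow_mono (hνmono ω) l
      rwa [lintegral_iSup (fun K => ((hνmeas K).pow_const l)) hmono] at h1
    refine step1.trans (iSup_le fun K => ?_)
    have hST : Disjoint (Finset.range n) (Finset.Ico n (n + K)) := by
      rw [Finset.disjoint_left]
      intro i hi hi'
      rw [Finset.mem_range] at hi
      rw [Finset.mem_Ico] at hi'
      omega
    have hveceq : ∀ ω, phiAux n a ((fun a (i : {x // x ∈ Finset.range n}) => ξ (i : ℕ) a) ω)
        = (E n).indicator (fun _ => (1:ℝ≥0∞)) ω := by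
      intro ω
      have hps : ∀ j, j ≤ n →
          (∑ i ∈ Finset.univ.filter
            (fun i : {x // x ∈ Finset.range n} => (i : ℕ) < j), ξ (i : ℕ) ω)
            = partialSum ξ j ω := fun j hj => sum_sub_lt n j hj (fun i => ξ i ω)
      unfold phiAux
      by_cases hω : ω ∈ E n
      · rw [Set.indicator_of_mem hω]
        refine if_pos ?_
        obtain ⟨h1, h2⟩ := (hEmem n ω).1 hω
        constructor
        · rw [hps n le_rfl]; exact h1
        · intro j hj
          rw [hps j (le_of_lt (Finset.mem_range.1 hj))]
          exact h2 j (Finset.mem_range.1 hj)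
      · rw [Set.indicator_of_notMem hω]
        refine if_neg ?_
        intro hB
        refine hω ((hEmem n ω).2 ⟨?_, ?_⟩)
        · rw [← hps n le_rfl]; exact hB.1
        · intro j hj
          rw [← hps j (le_of_lt hj)]
          exact hB.2 j (Finset.mem_range.2 hj)
    have hvecT : ∀ ω,
        psiAux n K l ((fun a (i : {x // x ∈ Finset.Ico n (n + K)}) => ξ (i : ℕ) a) ω)
          = (ν K ω) ^ l := fun ω => psiAux_apply ξ n K l ω
    have hindepF : IndepFun
        (phiAux n a ∘ fun a (i : {x // x ∈ Finset.range n}) => ξ (i : ℕ) a)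
        (psiAux n K l ∘ fun a (i : {x // x ∈ Finset.Ico n (n + K)}) => ξ (i : ℕ) a) μ :=
      (hindep.indepFun_finset (Finset.range n) (Finset.Ico n (n + K)) hST hmeas).comp
        (phiAux_meas n a) (psiAux_meas n K l)
    have hvecSmeas : Measurable fun a (i : {x // x ∈ Finset.range n}) => ξ (i : ℕ) a :=
      measurable_pi_lambda _ fun i => hmeas _
    have hvecTmeas : Measurable fun a (i : {x // x ∈ Finset.Ico n (n + K)}) => ξ (i : ℕ) a :=
      measurable_pi_lambda _ fun i => hmeas _
    have hmul := lintegral_mul_eq_lintegral_mul_lintegral_of_indepFun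
      ((phiAux_meas n a).comp hvecSmeas) ((psiAux_meas n K l).comp hvecTmeas) hindepF
    have hLHS : ∫⁻ ω, ((phiAux n a ∘ fun a (i : {x // x ∈ Finset.range n}) => ξ (i : ℕ) a)
          * (psiAux n K l ∘ fun a (i : {x // x ∈ Finset.Ico n (n + K)}) => ξ (i : ℕ) a)) ω ∂μ
        = ∫⁻ ω in E n, (ν K ω) ^ l ∂μ := by
      rw [← lintegral_indicator (hEmeas n)]
      refine lintegral_congr fun ω => ?_
      simp only [Pi.mul_apply, Function.comp_apply]
      rw [hveceq ω, hvecT ω]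
      by_cases hω : ω ∈ E n
      · rw [Set.indicator_of_mem hω, Set.indicator_of_mem hω, one_mul]
      · rw [Set.indicator_of_notMem hω, Set.indicator_of_notMem hω, zero_mul]
    have hφint : ∫⁻ ω,
        (phiAux n a ∘ fun a (i : {x // x ∈ Finset.range n}) => ξ (i : ℕ) a) ω ∂μ = μ (E n) := by
      rw [show (fun ω => (phiAux n a ∘ fun a (i : {x // x ∈ Finset.range n}) => ξ (i : ℕ) a) ω)
          = (E n).indicator (fun _ => (1:ℝ≥0∞)) from funext fun ω => hveceq ω]
      exact lintegral_indicator_one (hEmeas n)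
    have hψint : ∫⁻ ω,
        (psiAux n K l ∘ fun a (i : {x // x ∈ Finset.Ico n (n + K)}) => ξ (i : ℕ) a) ω ∂μ
        = ∫⁻ ω, (ν K ω) ^ l ∂μ :=
      lintegral_congr fun ω => hvecT ω
    rw [← hLHS, hmul, hφint, hψint]
    have hid2 : ∫⁻ ω, (ν K ω) ^ l ∂μ
        = ∫⁻ ω, (∑ m ∈ Finset.range K,
            if partialSum ξ m ω ≤ 1 then (1:ℝ≥0∞) else 0) ^ l ∂μ := by
      have h1 : (fun ω => (ν K ω) ^ l)
          = fun ω => gAux K l ((fun ω (i : Fin K) => ξ (n + (i : ℕ)) ω) ω) := by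
        funext ω
        rw [gAux_apply (Ω := Ω) (fun j => ξ (n + j) ω) K l]
      have h2 : (fun ω => (∑ m ∈ Finset.range K,
            if partialSum ξ m ω ≤ 1 then (1:ℝ≥0∞) else 0) ^ l)
          = fun ω => gAux K l ((fun ω (i : Fin K) => ξ (i : ℕ) ω) ω) := by
        funext ω
        rw [gAux_apply (Ω := Ω) (fun j => ξ j ω) K l]
        rfl
      rw [h1, h2]
      exact ((identDistrib_shift μ ξ hmeas hindep hid n K).comp (gAux_meas K l)).lintegral_eq
    rw [hid2]
    refine mul_le_mul_right ?_ _
    rw [hI]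
    refine lintegral_mono fun ω => ?_
    refine pow_le_pow_left' ?_ l
    exact ENNReal.sum_le_tsum (Finset.range K)
  calc ∫⁻ ω, C ω ^ l ∂μ = ∑' n, ∫⁻ ω in E n, C ω ^ l ∂μ := hsplit
    _ ≤ ∑' n, μ (E n) * I := ENNReal.tsum_le_tsum hbound
    _ = (∑' n, μ (E n)) * I := ENNReal.tsum_mul_right
    _ = μ (⋃ n, E n) * I := by rw [measure_iUnion hdisj hEmeas]
    _ ≤ 1 * I := mul_le_mul_left prob_le_one _
    _ = I := one_mul I


theorem stmt_8 {Ω : Type*} [MeasurableSpace Ω] (μ : Measure Ω) [IsProbabilityMeasure μ]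
    (ξ : ℕ → Ω → ℝ) (hmeas : ∀ i, Measurable (ξ i))
    (hpos : ∀ i, ∀ᵐ ω ∂μ, 0 < ξ i ω)
    (hindep : iIndepFun ξ μ)
    (hid : ∀ i, IdentDistrib (ξ i) (ξ 0) μ μ)
    (G : ℝ → ℝ) (hG0 : ∀ x, 0 ≤ G x)
    (hGloc : ∀ b : ℝ, 0 ≤ b → ∃ M : ℝ, ∀ x ∈ Icc 0 b, G x ≤ M)
    (l : ℕ) (hl : 1 ≤ l) (t : ℝ) (ht : 0 ≤ t) :
    (∫⁻ ω, (shotSum G ξ t ω) ^ l ∂μ)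
      ≤ (∫⁻ ω, (renewalCount ξ 1 ω) ^ l ∂μ) *
        ENNReal.ofReal
          ((∑ j ∈ Finset.range (⌊t⌋₊ + 1), sSup (G '' Ico (j : ℝ) ((j : ℝ) + 1))) ^ l) := by
  classical
  have hlne : l ≠ 0 := by omega
  have hS := measurable_partialSum ξ hmeas
  set I := ∫⁻ ω, (renewalCount ξ 1 ω) ^ l ∂μ with hI
  set F := Finset.range (⌊t⌋₊ + 1) with hF
  set M : ℕ → ℝ := fun j => sSup (G '' Ico (j : ℝ) ((j : ℝ) + 1)) with hM
  obtain ⟨Mb, hMb⟩ := hGloc ((⌊t⌋₊ : ℝ) + 1) (by positivity)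
  have hbdd : ∀ j ∈ F, BddAbove (G '' Ico (j : ℝ) ((j : ℝ) + 1)) := by
    intro j hj
    rw [hF, Finset.mem_range] at hj
    refine ⟨Mb, ?_⟩
    rintro x ⟨y, hy, rfl⟩
    refine hMb y ⟨le_trans (by positivity) hy.1, ?_⟩
    have hcast : (j : ℝ) + 1 ≤ (⌊t⌋₊ : ℝ) + 1 := by
      have : (j : ℝ) ≤ (⌊t⌋₊ : ℝ) := by exact_mod_cast Nat.lt_succ_iff.1 hj
      linarith
    linarith [hy.2]
  have hGleM : ∀ j ∈ F, ∀ y ∈ Ico (j : ℝ) ((j : ℝ) + 1), G y ≤ M j := fun j hj y hy =>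
    le_csSup (hbdd j hj) (Set.mem_image_of_mem G hy)
  have hMnn : ∀ j ∈ F, 0 ≤ M j := fun j hj =>
    le_trans (hG0 j) (hGleM j hj (j : ℝ) ⟨le_rfl, by linarith⟩)
  set N : ℕ → Ω → ℝ≥0∞ := fun j ω =>
    ∑' k, if t - (j : ℝ) - 1 < partialSum ξ k ω ∧ partialSum ξ k ω ≤ t - (j : ℝ)
      then (1:ℝ≥0∞) else 0 with hN
  have hNmeas : ∀ j, Measurable (N j) := by
    intro j; apply Measurable.ennreal_tsum; intro k
    exact Measurable.ite ((measurableSet_lt measurable_const (hS k)).inter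
      (measurableSet_le (hS k) measurable_const)) measurable_const measurable_const
  have hNle : ∀ j : ℕ, ∫⁻ ω, (N j ω) ^ l ∂μ ≤ I := fun j =>
    key_dom μ ξ hmeas hindep hid l hl (t - (j : ℝ) - 1) (t - (j : ℝ)) (by linarith)
  have hpos' : ∀ᵐ ω ∂μ, ∀ i, 0 < ξ i ω := (ae_all_iff).2 hpos
  have hdom : ∀ᵐ ω ∂μ, shotSum G ξ t ω ≤ ∑ j ∈ F, ENNReal.ofReal (M j) * N j ω := by
    filter_upwards [hpos'] with ω hω
    have hSnn : ∀ k, 0 ≤ partialSum ξ k ω :=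
      fun k => Finset.sum_nonneg fun i _ => (hω i).le
    have hterm : ∀ k, ENNReal.ofReal
        (if partialSum ξ k ω ≤ t then G (t - partialSum ξ k ω) else 0)
        ≤ ∑ j ∈ F, ENNReal.ofReal (M j) *
            (if t - (j : ℝ) - 1 < partialSum ξ k ω ∧ partialSum ξ k ω ≤ t - (j : ℝ)
              then (1:ℝ≥0∞) else 0) := by
      intro k
      by_cases hk : partialSum ξ k ω ≤ t
      · set y := t - partialSum ξ k ω with hy
        have hy0 : 0 ≤ y := by rw [hy]; linarith
        have hyt : y ≤ t := by rw [hy]; linarith [hSnn k]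
        set j0 := ⌊y⌋₊ with hj0
        have hj0F : j0 ∈ F := by
          rw [hF, Finset.mem_range, Nat.lt_succ_iff]
          exact Nat.floor_le_floor hyt
        have hylt : y < (j0 : ℝ) + 1 := Nat.lt_floor_add_one y
        have hyge : (j0 : ℝ) ≤ y := Nat.floor_le hy0
        have hcond : t - (j0 : ℝ) - 1 < partialSum ξ k ω ∧
            partialSum ξ k ω ≤ t - (j0 : ℝ) := by
          constructor
          · linarith
          · linarith
        calc ENNReal.ofReal (if partialSum ξ k ω ≤ t then G (t - partialSum ξ k ω) else 0)
            = ENNReal.ofReal (G y) := by rw [if_pos hk]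
          _ ≤ ENNReal.ofReal (M j0) :=
              ENNReal.ofReal_le_ofReal (hGleM j0 hj0F y ⟨hyge, hylt⟩)
          _ = ENNReal.ofReal (M j0) *
              (if t - (j0 : ℝ) - 1 < partialSum ξ k ω ∧ partialSum ξ k ω ≤ t - (j0 : ℝ)
                then (1:ℝ≥0∞) else 0) := by rw [if_pos hcond, mul_one]
          _ ≤ _ := Finset.single_le_sum
              (f := fun j => ENNReal.ofReal (M j) *
                (if t - (j : ℝ) - 1 < partialSum ξ k ω ∧ partialSum ξ k ω ≤ t - (j : ℝ)
                  then (1:ℝ≥0∞) else 0))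
              (fun j _ => zero_le) hj0F
      · simp [hk]
    calc shotSum G ξ t ω
        ≤ ∑' k, ∑ j ∈ F, ENNReal.ofReal (M j) *
            (if t - (j : ℝ) - 1 < partialSum ξ k ω ∧ partialSum ξ k ω ≤ t - (j : ℝ)
              then (1:ℝ≥0∞) else 0) := ENNReal.tsum_le_tsum hterm
      _ = ∑ j ∈ F, ENNReal.ofReal (M j) * N j ω := by
          rw [Summable.tsum_finsetSum (fun j _ => ENNReal.summable)]
          exact Finset.sum_congr rfl fun j hj => ENNReal.tsum_mul_left
  have hmono : ∫⁻ ω, shotSum G ξ t ω ^ l ∂μ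
      ≤ ∫⁻ ω, (∑ j ∈ F, ENNReal.ofReal (M j) * N j ω) ^ l ∂μ :=
    lintegral_mono_ae (hdom.mono fun ω h => pow_le_pow_left' h l)
  set A := ∑ j ∈ F, ENNReal.ofReal (M j) with hA
  have hAeq : A = ENNReal.ofReal (∑ j ∈ F, M j) := (ENNReal.ofReal_sum_of_nonneg hMnn).symm
  by_cases hA0 : A = 0
  · have hsum0 : ∑ j ∈ F, ENNReal.ofReal (M j) = 0 := by rw [← hA]; exact hA0
    have hT0 : ∀ ω, (∑ j ∈ F, ENNReal.ofReal (M j) * N j ω) = 0 := by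
      intro ω
      refine Finset.sum_eq_zero fun j hj => ?_
      rw [(Finset.sum_eq_zero_iff).1 hsum0 j hj, zero_mul]
    refine le_trans hmono ?_
    simp only [hT0, zero_pow hlne, lintegral_zero]
    exact zero_le
  · have hAtop : A ≠ ⊤ := by rw [hAeq]; exact ENNReal.ofReal_ne_top
    set w : ℕ → ℝ≥0∞ := fun j => ENNReal.ofReal (M j) * A⁻¹ with hw
    have hwsum : ∑ j ∈ F, w j = 1 := by
      rw [hw, ← Finset.sum_mul, ← hA, ENNReal.mul_inv_cancel hA0 hAtop]
    have hAw : ∀ j, A * w j = ENNReal.ofReal (M j) := by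
      intro j
      rw [hw]
      calc A * (ENNReal.ofReal (M j) * A⁻¹)
          = ENNReal.ofReal (M j) * (A * A⁻¹) := by ring
        _ = ENNReal.ofReal (M j) := by rw [ENNReal.mul_inv_cancel hA0 hAtop, mul_one]
    have hptwise : ∀ ω, (∑ j ∈ F, ENNReal.ofReal (M j) * N j ω) ^ l
        ≤ A ^ l * ∑ j ∈ F, w j * (N j ω) ^ l := by
      intro ω
      have h1 : (∑ j ∈ F, ENNReal.ofReal (M j) * N j ω) = A * ∑ j ∈ F, w j * N j ω := by
        rw [Finset.mul_sum]
        refine Finset.sum_congr rfl fun j _ => ?_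
        rw [← mul_assoc, hAw j]
      rw [h1, mul_pow]
      refine mul_le_mul_right ?_ _
      have h2 := ENNReal.rpow_arith_mean_le_arith_mean_rpow F w (fun j => N j ω) hwsum
        (p := (l : ℝ)) (by exact_mod_cast hl)
      simpa [ENNReal.rpow_natCast] using h2
    have hmeas2 : Measurable fun ω => ∑ j ∈ F, w j * (N j ω) ^ l :=
      Finset.measurable_sum _ fun j _ => (measurable_const.mul ((hNmeas j).pow_const l))
    calc ∫⁻ ω, shotSum G ξ t ω ^ l ∂μ
        ≤ ∫⁻ ω, (∑ j ∈ F, ENNReal.ofReal (M j) * N j ω) ^ l ∂μ := hmono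
      _ ≤ ∫⁻ ω, A ^ l * ∑ j ∈ F, w j * (N j ω) ^ l ∂μ := lintegral_mono fun ω => hptwise ω
      _ = A ^ l * ∫⁻ ω, ∑ j ∈ F, w j * (N j ω) ^ l ∂μ := lintegral_const_mul _ hmeas2
      _ = A ^ l * ∑ j ∈ F, w j * ∫⁻ ω, (N j ω) ^ l ∂μ := by
          rw [lintegral_finset_sum F (fun j _ => ((hNmeas j).pow_const l).const_mul _)]
          congr 1
          exact Finset.sum_congr rfl fun j _ => lintegral_const_mul _ ((hNmeas j).pow_const l)
      _ ≤ A ^ l * ∑ j ∈ F, w j * I := by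
          refine mul_le_mul_right (Finset.sum_le_sum fun j _ => ?_) _
          exact mul_le_mul_right (hNle j) _
      _ = A ^ l * I := by rw [← Finset.sum_mul, hwsum, one_mul]
      _ = I * ENNReal.ofReal ((∑ j ∈ F, M j) ^ l) := by
          rw [mul_comm]
          congr 1
          rw [hAeq, ← ENNReal.ofReal_pow (Finset.sum_nonneg hMnn)]
end

section
/- Let (ξ_k, η_k), k ≥ 1, be i.i.d. copies of a vector (ξ, η) with positive components and E[ξ] = m < ∞. With S₀ = 0, Sₙ = ξ₁ + ⋯ + ξₙ, T_k = S_{k-1} + η_k, and N(x) = Σ_{k≥1} 1{T_k ≤ x}, one has for every s > 0: lim_{n→∞} N(ns)/n = s/m almost surely. -/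
open MeasureTheory ProbabilityTheory Filter Finset
open scoped ENNReal

lemma tsum_ite_eq_card (p : ℕ → Prop) [DecidablePred p] (F : Finset ℕ)
    (h : ∀ k, p k → k ∈ F) :
    (∑' k : ℕ, if p k then (1 : ℝ≥0∞) else 0) = ((F.filter p).card : ℝ≥0∞) := by
  rw [tsum_eq_sum (s := F.filter p)
    (fun k hk => if_neg (fun hp => hk (Finset.mem_filter.mpr ⟨h k hp, hp⟩)))]
  rw [Finset.sum_congr rfl (fun k hk => if_pos (Finset.mem_filter.mp hk).2)]
  simp

lemma det_main (S e : ℕ → ℝ) (m s : ℝ) (hm : 0 < m) (hs : 0 < s)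
    (hS : Tendsto (fun k : ℕ => S k / (k : ℝ)) atTop (nhds m))
    (hepos : ∀ k, 0 < e k)
    (p : ℕ → ℝ) (hp : Tendsto p atTop (nhds 0)) (hpnn : ∀ y, 0 ≤ p y)
    (hA : ∀ y : ℕ, Tendsto
      (fun j : ℕ => (∑ k ∈ Finset.range j, if (y : ℝ) < e k then (1:ℝ) else 0) / (j : ℝ))
      atTop (nhds (p y))) :
    Tendsto (fun n : ℕ =>
      (∑' k : ℕ, if S k + e k ≤ (n : ℝ) * s then (1 : ℝ≥0∞) else 0).toReal / (n : ℝ))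
      atTop (nhds (s / m)) := by
  classical
  -- growth bounds
  have growth_lower : ∀ t : ℝ, t < m → ∃ k0 : ℕ, ∀ k, k0 ≤ k → t * k ≤ S k := by
    intro t ht
    have h2 := (hS.eventually (eventually_gt_nhds ht)).and (eventually_ge_atTop 1)
    rw [eventually_atTop] at h2
    obtain ⟨k0, hk0⟩ := h2
    refine ⟨k0, fun k hk => ?_⟩
    obtain ⟨ha, hb⟩ := hk0 k hk
    have hkpos : (0:ℝ) < k := by exact_mod_cast Nat.lt_of_lt_of_le Nat.zero_lt_one hb
    exact ((lt_div_iff₀ hkpos).mp ha).le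
  have growth_upper : ∀ t : ℝ, m < t → ∃ k0 : ℕ, ∀ k, k0 ≤ k → S k ≤ t * k := by
    intro t ht
    have h2 := (hS.eventually (eventually_lt_nhds ht)).and (eventually_ge_atTop 1)
    rw [eventually_atTop] at h2
    obtain ⟨k0, hk0⟩ := h2
    refine ⟨k0, fun k hk => ?_⟩
    obtain ⟨ha, hb⟩ := hk0 k hk
    have hkpos : (0:ℝ) < k := by exact_mod_cast Nat.lt_of_lt_of_le Nat.zero_lt_one hb
    exact ((div_lt_iff₀ hkpos).mp ha).le
  -- a subset bound
  have key_subset : ∀ (t : ℝ) (k1 : ℕ), 0 < t → (∀ k, k1 ≤ k → t * k ≤ S k) →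
      ∀ (x : ℝ), 0 ≤ x → ∀ k : ℕ, S k ≤ x → k < k1 + ⌊x / t⌋₊ + 1 := by
    intro t k1 ht hgr x hx k hk
    by_cases hkk : k < k1
    · omega
    · push_neg at hkk
      have h1 : t * k ≤ x := le_trans (hgr k hkk) hk
      have h2 : (k : ℝ) ≤ x / t := (le_div_iff₀ ht).mpr (by linarith [mul_comm t (k:ℝ)])
      have := Nat.le_floor h2
      omega
  obtain ⟨k0, hk0⟩ := growth_lower (m/2) (by linarith)
  set K : ℕ → ℕ := fun n => k0 + ⌊(n * s) / (m/2)⌋₊ + 1 with hKdef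
  have hKmem : ∀ (n k : ℕ), S k ≤ (n:ℝ) * s → k ∈ Finset.range (K n) := by
    intro n k h
    exact Finset.mem_range.mpr (key_subset (m/2) k0 (by linarith) hk0 ((n:ℝ)*s) (by positivity) k h)
  set N : ℕ → ℕ := fun n => ((Finset.range (K n)).filter (fun k => S k + e k ≤ (n:ℝ) * s)).card
    with hNdef
  have hcount : ∀ n : ℕ,
      (∑' k : ℕ, if S k + e k ≤ (n : ℝ) * s then (1 : ℝ≥0∞) else 0).toReal = (N n : ℝ) := by
    intro n
    rw [tsum_ite_eq_card _ (Finset.range (K n))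
      (fun k hk => hKmem n k (le_trans (le_add_of_nonneg_right (hepos k).le) hk))]
    simp [hNdef]
  have hfun : (fun n : ℕ =>
      (∑' k : ℕ, if S k + e k ≤ (n : ℝ) * s then (1 : ℝ≥0∞) else 0).toReal / (n : ℝ))
      = fun n : ℕ => (N n : ℝ) / n := funext fun n => by rw [hcount n]
  rw [hfun]
  have hns : Tendsto (fun n : ℕ => (n:ℝ) * s) atTop atTop :=
    tendsto_natCast_atTop_atTop.atTop_mul_const hs
  rw [tendsto_order]
  constructor
  · -- lower bound branch
    intro b hb
    have hsm : 0 < s / m := div_pos hs hm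
    obtain ⟨b', hb'def⟩ : ∃ x : ℝ, x = (max b 0 + s/m)/2 := ⟨_, rfl⟩
    have hmax : max b 0 < s/m := max_lt hb hsm
    have hb'pos : 0 < b' := by
      have := le_max_right b 0; rw [hb'def]; linarith
    have hb'lt : b' < s/m := by rw [hb'def]; linarith
    have hbb' : b < b' := by
      have := le_max_left b 0; rw [hb'def]; linarith
    obtain ⟨g2, hg2def⟩ : ∃ x : ℝ, x = (b' + s/m)/2 := ⟨_, rfl⟩
    have hg2pos : 0 < g2 := by rw [hg2def]; linarith
    have hb'g2 : b' < g2 := by rw [hg2def]; linarith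
    have hg2lt : g2 < s/m := by rw [hg2def]; linarith
    obtain ⟨gap, hgapdef⟩ : ∃ x : ℝ, x = g2 - b' := ⟨_, rfl⟩
    have hgap : 0 < gap := by rw [hgapdef]; linarith
    obtain ⟨L, hLdef⟩ : ∃ x : ℝ, x = 2*s/m + 1 := ⟨_, rfl⟩
    have hL : 0 < L := by
      have : 0 < 2*s/m := by positivity
      rw [hLdef]; linarith
    obtain ⟨y, hy⟩ := (hp.eventually_lt_const (show (0:ℝ) < gap/(4*L) by positivity)).exists
    obtain ⟨δ, hdeltadef⟩ : ∃ x : ℝ, x = gap/(4*L) := ⟨_, rfl⟩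
    have hdelta : 0 < δ := by rw [hdeltadef]; positivity
    have hAy := (hA y).eventually_lt_const (show p y < p y + δ by linarith [hdelta])
    rw [eventually_atTop] at hAy
    obtain ⟨j0, hj0⟩ := hAy
    have hmg2 : m < s/g2 := by
      rw [lt_div_iff₀ hg2pos]
      have := (lt_div_iff₀ hm).mp hg2lt
      linarith [mul_comm m g2, mul_comm g2 m]
    obtain ⟨t', ht'def⟩ : ∃ x : ℝ, x = (m + s/g2)/2 := ⟨_, rfl⟩
    have ht'1 : m < t' := by rw [ht'def]; linarith
    have ht'2 : t' < s/g2 := by rw [ht'def]; linarith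
    have ht'pos : 0 < t' := lt_trans hm ht'1
    have hg2t' : g2 < s/t' := by
      rw [lt_div_iff₀ ht'pos]
      have := (lt_div_iff₀ hg2pos).mp ht'2
      linarith [mul_comm g2 t', mul_comm t' g2]
    obtain ⟨k2, hk2⟩ := growth_upper t' ht'1
    have E3 : ∀ᶠ n : ℕ in atTop, (y:ℝ) ≤ (n:ℝ)*s := hns.eventually_ge_atTop _
    have hns2 : Tendsto (fun n : ℕ => ((n:ℝ)*s - y)/t') atTop atTop := by
      apply Tendsto.atTop_div_const ht'pos
      exact (tendsto_atTop_add_const_right atTop (-(y:ℝ)) hns).congr (fun n => by ring)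
    have E4 : ∀ᶠ n : ℕ in atTop, (k2:ℝ) ≤ ((n:ℝ)*s - y)/t' := hns2.eventually_ge_atTop _
    have E5 : ∀ᶠ n : ℕ in atTop, (j0:ℝ) ≤ ((n:ℝ)*s)/(m/2) :=
      (hns.atTop_div_const (by linarith)).eventually_ge_atTop _
    have E6 : ∀ᶠ n : ℕ in atTop, ((y:ℝ)/t' + k2)/(n:ℝ) < s/t' - g2 :=
      (tendsto_const_div_atTop_nhds_zero_nat _).eventually_lt_const (by linarith)
    filter_upwards [eventually_ge_atTop 1, eventually_ge_atTop (k0+1), E3, E4, E5, E6]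
      with n hn1 hnk0 hE3 hE4 hE5 hE6
    have npos : (0:ℝ) < n := by exact_mod_cast Nat.lt_of_lt_of_le Nat.zero_lt_one hn1
    have hKn_eq : K n = k0 + ⌊((n:ℝ)*s)/(m/2)⌋₊ + 1 := rfl
    set F1 := (Finset.range (K n)).filter (fun k => S k ≤ (n:ℝ)*s - y) with hF1
    set F2 := (Finset.range (K n)).filter (fun k => S k + e k ≤ (n:ℝ)*s) with hF2
    set F3 := (Finset.range (K n)).filter (fun k => (y:ℝ) < e k) with hF3
    have hIco : Finset.Ico k2 (⌊((n:ℝ)*s - y)/t'⌋₊ + 1) ⊆ F1 := by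
      intro k hk
      rw [Finset.mem_Ico] at hk
      have hkle : (k:ℝ) ≤ ((n:ℝ)*s - y)/t' := by
        have hkf : k ≤ ⌊((n:ℝ)*s - y)/t'⌋₊ := by omega
        exact le_trans (Nat.cast_le.mpr hkf)
          (Nat.floor_le (le_trans (Nat.cast_nonneg k2) hE4))
      have hSk : S k ≤ (n:ℝ)*s - y := by
        have h1 : S k ≤ t' * k := hk2 k hk.1
        have h2 : t' * k ≤ t' * (((n:ℝ)*s - y)/t') :=
          mul_le_mul_of_nonneg_left hkle ht'pos.le
        have h3 : t' * (((n:ℝ)*s - y)/t') = (n:ℝ)*s - y := by field_simp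
        linarith
      refine Finset.mem_filter.mpr ⟨hKmem n k ?_, hSk⟩
      have hynn : (0:ℝ) ≤ y := Nat.cast_nonneg y
      linarith
    have hk2cast : k2 < ⌊((n:ℝ)*s - y)/t'⌋₊ + 1 := by
      have := Nat.le_floor hE4
      omega
    have hC1 : ((n:ℝ)*s - y)/t' - k2 ≤ (F1.card : ℝ) := by
      have hcards : (Finset.Ico k2 (⌊((n:ℝ)*s - y)/t'⌋₊ + 1)).card ≤ F1.card :=
        Finset.card_le_card hIco
      rw [Nat.card_Ico] at hcards
      have hcast : ((⌊((n:ℝ)*s - y)/t'⌋₊ + 1 - k2 : ℕ) : ℝ)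
          = (⌊((n:ℝ)*s - y)/t'⌋₊ : ℝ) + 1 - k2 := by
        rw [Nat.cast_sub (le_of_lt hk2cast)]
        push_cast; ring
      have hfl := Nat.lt_floor_add_one (((n:ℝ)*s - y)/t')
      have hcc := (Nat.cast_le (α := ℝ)).mpr hcards
      rw [hcast] at hcc
      linarith
    have hsub13 : F1 ⊆ F2 ∪ F3 := by
      intro k hk
      obtain ⟨hkR, hkS⟩ := Finset.mem_filter.mp hk
      rcases lt_or_ge (y:ℝ) (e k) with h | h
      · exact Finset.mem_union_right _ (Finset.mem_filter.mpr ⟨hkR, h⟩)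
      · exact Finset.mem_union_left _ (Finset.mem_filter.mpr ⟨hkR, by linarith⟩)
    have hcard13 : (F1.card : ℝ) ≤ (F2.card : ℝ) + (F3.card : ℝ) := by
      have := le_trans (Finset.card_le_card hsub13) (Finset.card_union_le F2 F3)
      exact_mod_cast this
    have hKn1 : 1 ≤ K n := by omega
    have hKnj0 : j0 ≤ K n := by
      have h1 : ((n:ℝ)*s)/(m/2) < (⌊((n:ℝ)*s)/(m/2)⌋₊ : ℝ) + 1 := Nat.lt_floor_add_one _
      have h2 : (j0:ℝ) < (K n : ℝ) := by
        have hKc : (K n : ℝ) = (k0:ℝ) + (⌊((n:ℝ)*s)/(m/2)⌋₊ : ℝ) + 1 := by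
          rw [hKn_eq]; push_cast; ring
        have hk0nn : (0:ℝ) ≤ k0 := Nat.cast_nonneg _
        linarith
      exact le_of_lt (Nat.cast_lt.mp h2)
    have hKpos : (0:ℝ) < K n := by exact_mod_cast Nat.lt_of_lt_of_le Nat.zero_lt_one hKn1
    have hF3sum : (F3.card : ℝ) = ∑ k ∈ Finset.range (K n), if (y:ℝ) < e k then (1:ℝ) else 0 :=
      (Finset.sum_boole _ _).symm
    have hF3bound : (F3.card : ℝ) ≤ (p y + δ) * K n := by
      have hlt := hj0 (K n) hKnj0
      rw [div_lt_iff₀ hKpos] at hlt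
      rw [hF3sum]
      exact le_of_lt hlt
    have hKle : (K n : ℝ) ≤ (n:ℝ) * L := by
      have h1 : (⌊((n:ℝ)*s)/(m/2)⌋₊ : ℝ) ≤ ((n:ℝ)*s)/(m/2) := Nat.floor_le (by positivity)
      have h2 : ((n:ℝ)*s)/(m/2) = (n:ℝ) * (2*s/m) := by field_simp
      have h3 : (K n : ℝ) = (k0:ℝ) + (⌊((n:ℝ)*s)/(m/2)⌋₊ : ℝ) + 1 := by
        rw [hKn_eq]; push_cast; ring
      have h4 : (k0:ℝ) + 1 ≤ n := by exact_mod_cast hnk0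
      have h5 : (n:ℝ) * L = (n:ℝ)*(2*s/m) + n := by rw [hLdef]; ring
      have h6 : (⌊((n:ℝ)*s)/(m/2)⌋₊ : ℝ) ≤ (n:ℝ)*(2*s/m) := by rw [← h2]; exact h1
      linarith
    have hpyδ : 0 ≤ p y + δ := by linarith [hpnn y]
    have hF3n : (F3.card : ℝ) ≤ ((p y + δ) * L) * n := by
      calc (F3.card:ℝ) ≤ (p y + δ) * K n := hF3bound
        _ ≤ (p y + δ) * ((n:ℝ) * L) := mul_le_mul_of_nonneg_left hKle hpyδ
        _ = ((p y + δ) * L) * n := by ring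
    have hsmall : (p y + δ) * L ≤ gap/2 := by
      have hsum : p y + δ ≤ gap/(4*L) + gap/(4*L) := by
        rw [hdeltadef]; linarith [hy, hdeltadef.symm ▸ hy]
      calc (p y + δ)*L ≤ (gap/(4*L) + gap/(4*L)) * L :=
            mul_le_mul_of_nonneg_right hsum hL.le
        _ = gap/2 := by field_simp; ring
    rw [lt_div_iff₀ npos]
    show b * n < (F2.card : ℝ)
    have P1 : ((p y + δ) * L) * n ≤ (gap/2) * n := mul_le_mul_of_nonneg_right hsmall npos.le
    have hE6' : (y:ℝ)/t' + k2 < (s/t' - g2) * n := (div_lt_iff₀ npos).mp hE6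
    have hst : ((n:ℝ)*s - y)/t' = (s/t')*n - (y:ℝ)/t' := by field_simp
    rw [hst] at hC1
    have hE6'' : (s/t' - g2)*(n:ℝ) = (s/t')*n - g2*n := by ring
    have hgn : g2*(n:ℝ) - (gap/2)*n = b'*n + (gap/2)*n := by rw [hgapdef]; ring
    have P3 : b*(n:ℝ) < b'*n := mul_lt_mul_of_pos_right hbb' npos
    have hposg : 0 < (gap/2)*(n:ℝ) := by positivity
    linarith
  · -- upper bound branch
    intro b hb
    have hsm : 0 < s / m := div_pos hs hm
    have hbpos : 0 < b := lt_trans hsm hb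
    set t : ℝ := (s/b + m)/2 with htdef
    have hsb : s / b < m := by
      rw [div_lt_iff₀ hbpos]
      have := (div_lt_iff₀ hm).mp hb
      linarith [mul_comm b m]
    have ht2 : t < m := by
      have : 0 < s / b := div_pos hs hbpos
      simp only [htdef]; linarith
    have ht1 : s / b < t := by simp only [htdef]; linarith
    have ht0 : 0 < t := lt_trans (div_pos hs hbpos) ht1
    have hstb : s / t < b := by
      rw [div_lt_iff₀ ht0]
      have := (div_lt_iff₀ hbpos).mp ht1
      linarith [mul_comm t b]
    obtain ⟨k1, hk1⟩ := growth_lower t ht2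
    have hcd := (tendsto_const_div_atTop_nhds_zero_nat ((k1:ℝ) + 1)).eventually_lt_const
      (by linarith : (0:ℝ) < b - s/t)
    filter_upwards [eventually_ge_atTop 1, hcd] with n hn1 hcdn
    have npos : (0:ℝ) < n := by exact_mod_cast Nat.lt_of_lt_of_le Nat.zero_lt_one hn1
    have hsub : (Finset.range (K n)).filter (fun k => S k + e k ≤ (n:ℝ) * s)
        ⊆ Finset.range (k1 + ⌊((n:ℝ)*s) / t⌋₊ + 1) := by
      intro k hk
      have hTk := (Finset.mem_filter.mp hk).2
      have hSk : S k ≤ (n:ℝ) * s := le_trans (le_add_of_nonneg_right (hepos k).le) hTk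
      exact Finset.mem_range.mpr (key_subset t k1 ht0 hk1 ((n:ℝ)*s) (by positivity) k hSk)
    have hcard : (N n : ℝ) ≤ (k1 : ℝ) + ⌊((n:ℝ)*s) / t⌋₊ + 1 := by
      have := Finset.card_le_card hsub
      rw [Finset.card_range] at this
      exact_mod_cast this
    have hfl : (⌊((n:ℝ)*s) / t⌋₊ : ℝ) ≤ (n:ℝ)*s/t := Nat.floor_le (by positivity)
    have hNb : (N n : ℝ) < b * n := by
      have h1 : ((k1:ℝ) + 1) < (b - s/t) * n := (div_lt_iff₀ npos).mp hcdn
      have h2 : (n:ℝ)*s/t = (s/t) * n := by ring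
      nlinarith
    rw [div_lt_iff₀ npos]
    exact hNb

/-- Points of the perturbed random walk: `T_{k+1} = S_k + η_{k+1}`, `0`-indexed. -/
noncomputable def prwPoint {Ω : Type*} (ξ η : ℕ → Ω → ℝ) (k : ℕ) (ω : Ω) : ℝ :=
  partialSum ξ k ω + η k ω

/-- `N(x) = #{k : T_k ≤ x}`, as an `ℝ≥0∞`-valued count. -/
noncomputable def prwCount {Ω : Type*} (ξ η : ℕ → Ω → ℝ) (x : ℝ) (ω : Ω) : ℝ≥0∞ :=
  ∑' k : ℕ, if prwPoint ξ η k ω ≤ x then (1 : ℝ≥0∞) else 0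

theorem stmt_9 {Ω : Type*} [MeasurableSpace Ω] (μ : Measure Ω) [IsProbabilityMeasure μ]
    (ξ η : ℕ → Ω → ℝ) (hmeas : ∀ i, Measurable (fun ω => (ξ i ω, η i ω)))
    (hpos : ∀ i, ∀ᵐ ω ∂μ, 0 < ξ i ω ∧ 0 < η i ω)
    (hindep : iIndepFun (fun i ω => (ξ i ω, η i ω)) μ)
    (hid : ∀ i, IdentDistrib (fun ω => (ξ i ω, η i ω)) (fun ω => (ξ 0 ω, η 0 ω)) μ μ)
    (hint : Integrable (ξ 0) μ) (m : ℝ) (hm : m = ∫ ω, ξ 0 ω ∂μ)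
    (s : ℝ) (hs : 0 < s) :
    ∀ᵐ ω ∂μ, Tendsto
      (fun n : ℕ => (prwCount ξ η ((n : ℝ) * s) ω).toReal / (n : ℝ))
      atTop (nhds (s / m)) := by
  classical
  have hξmeas : ∀ i, Measurable (ξ i) := fun i => measurable_fst.comp (hmeas i)
  have hηmeas : ∀ i, Measurable (η i) := fun i => measurable_snd.comp (hmeas i)
  -- positivity of the mean
  have hm0 : 0 < m := by
    have hnn : 0 ≤ᵐ[μ] ξ 0 := (hpos 0).mono fun ω h => h.1.le
    rw [hm, integral_pos_iff_support_of_nonneg_ae hnn hint]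
    rw [pos_iff_ne_zero]
    intro h0
    have hz : ∀ᵐ ω ∂μ, ξ 0 ω = 0 := by
      rw [ae_iff]
      simpa [Function.support] using h0
    have hfalse : ∀ᵐ (ω : Ω) ∂μ, False := by
      filter_upwards [hz, hpos 0] with ω hωz hωp
      exact absurd hωz (ne_of_gt hωp.1)
    obtain ⟨ω, hω⟩ := hfalse.exists
    exact hω
  -- SLLN for ξ
  have hslln1 : ∀ᵐ ω ∂μ, Tendsto (fun n : ℕ => partialSum ξ n ω / (n:ℝ)) atTop (nhds m) := by
    have hcomp := hindep.comp (fun _ => (Prod.fst : ℝ × ℝ → ℝ)) (fun _ => measurable_fst)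
    have hiid : Pairwise (Function.onFun (IndepFun · · μ) ξ) := fun i j hij => hcomp.indepFun hij
    have hident : ∀ i, IdentDistrib (ξ i) (ξ 0) μ μ := fun i => (hid i).comp measurable_fst
    have h := strong_law_ae_real ξ hint hiid hident
    rw [← hm] at h
    exact h.mono fun ω hω => by simpa [partialSum] using hω
  -- tail probabilities
  set p : ℕ → ℝ := fun y => (μ {ω | (y:ℝ) < η 0 ω}).toReal with hpdef
  have hp0 : Tendsto p atTop (nhds 0) := by
    have hAnti : Antitone (fun y : ℕ => {ω | (y:ℝ) < η 0 ω}) := by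
      intro a b hab
      refine Set.setOf_subset_setOf.mpr fun ω hω => ?_
      exact lt_of_le_of_lt (Nat.cast_le.mpr hab) hω
    have hInter : (⋂ y : ℕ, {ω | (y:ℝ) < η 0 ω}) = ∅ := by
      ext ω
      simp only [Set.mem_iInter, Set.mem_setOf_eq, Set.mem_empty_iff_false, iff_false,
        not_forall, not_lt]
      exact exists_nat_ge _
    have htm := tendsto_measure_iInter_atTop
      (fun y => (measurableSet_lt measurable_const (hηmeas 0)).nullMeasurableSet)
      hAnti ⟨0, measure_ne_top μ _⟩
    rw [hInter, measure_empty] at htm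
    have := (ENNReal.tendsto_toReal (a := 0) (by simp)).comp htm
    exact this
  have hpnn : ∀ y, 0 ≤ p y := fun y => ENNReal.toReal_nonneg
  -- SLLN for indicators of η
  have hslln2 : ∀ y : ℕ, ∀ᵐ ω ∂μ, Tendsto
      (fun j : ℕ => (∑ k ∈ Finset.range j, if (y:ℝ) < η k ω then (1:ℝ) else 0) / (j:ℝ))
      atTop (nhds (p y)) := by
    intro y
    set g : ℝ × ℝ → ℝ := fun q => if (y:ℝ) < q.2 then 1 else 0 with hgdef
    have hg : Measurable g :=
      Measurable.ite (measurableSet_lt measurable_const measurable_snd)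
        measurable_const measurable_const
    set X : ℕ → Ω → ℝ := fun i ω => if (y:ℝ) < η i ω then (1:ℝ) else 0 with hXdef
    have hAmeas : MeasurableSet {ω | (y:ℝ) < η 0 ω} :=
      measurableSet_lt measurable_const (hηmeas 0)
    have hXind : X 0 = Set.indicator {ω | (y:ℝ) < η 0 ω} (fun _ => (1:ℝ)) := by
      ext ω
      simp [hXdef, Set.indicator_apply]
    have hintX : Integrable (X 0) μ := by
      rw [hXind]
      exact (integrable_const (1:ℝ)).indicator hAmeas
    have hcomp := hindep.comp (fun _ => g) (fun _ => hg)
    have hiid : Pairwise (Function.onFun (IndepFun · · μ) X) := fun i j hij => hcomp.indepFun hij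
    have hident : ∀ i, IdentDistrib (X i) (X 0) μ μ := fun i => (hid i).comp hg
    have h := strong_law_ae_real X hintX hiid hident
    have hInt : ∫ ω, X 0 ω ∂μ = p y := by
      rw [hXind, integral_indicator_const (1:ℝ) hAmeas]
      simp [hpdef, measureReal_def]
    rw [hInt] at h
    exact h.mono fun ω hω => by simpa [hXdef] using hω
  filter_upwards [hslln1, ae_all_iff.mpr hpos, ae_all_iff.mpr hslln2] with ω h1 h2 h3
  have := det_main (fun k => partialSum ξ k ω) (fun k => η k ω) m s hm0 hs h1
    (fun k => (h2 k).2) p hp0 hpnn h3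
  unfold prwCount prwPoint
  convert this
end

section
/- Let (ξ_k, η_k), k ≥ 1, be i.i.d. copies of a vector (ξ, η) with positive components and m := E[ξ] < ∞. Define the perturbed random walk T_k = S_{k-1} + η_k (where Sₙ = ξ₁ + ⋯ + ξₙ, S₀ = 0) and N(x) = Σ_{k≥1} 1{T_k ≤ x}. Then almost surely, sup_{t ∈ [0,1]} | m·(N(n) - N(n(1-t)−))/n − t | → 0 as n → ∞, where N(x−) denotes the left limit. -/
open MeasureTheory ProbabilityTheory Filter Set Topology
open scoped ENNReal

/-- The left limit `N(x−) = #{k : T_k < x}`, as an `ℝ≥0∞`-valued count. -/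
noncomputable def prwCountLeft {Ω : Type*} (ξ η : ℕ → Ω → ℝ) (x : ℝ) (ω : Ω) : ℝ≥0∞ :=
  ∑' k : ℕ, if prwPoint ξ η k ω < x then (1 : ℝ≥0∞) else 0

section Det

variable {a b : ℕ → ℝ} {m : ℝ}

noncomputable def nuD (a : ℕ → ℝ) (x : ℝ) : ℕ := sInf {k | x < a k}

lemma aTop (hal : Tendsto (fun n : ℕ => a n / n) atTop (𝓝 m)) (hm : 0 < m) :
    Tendsto a atTop atTop := by
  have h2 : ∀ᶠ n : ℕ in atTop, m / 2 < a n / n :=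
    hal.eventually (eventually_gt_nhds (by linarith))
  have hbig : Tendsto (fun n : ℕ => m / 2 * n) atTop atTop := by
    exact Tendsto.const_mul_atTop (by linarith) tendsto_natCast_atTop_atTop
  apply tendsto_atTop_mono' _ _ hbig
  filter_upwards [h2, eventually_ge_atTop 1] with n hn hn1
  have hnpos : (0:ℝ) < n := by exact_mod_cast hn1
  rw [lt_div_iff₀ hnpos] at hn
  linarith

lemma nu_spec (haT : Tendsto a atTop atTop) (x : ℝ) : x < a (nuD a x) := by
  have : {k | x < a k}.Nonempty := by
    obtain ⟨k, hk⟩ := (haT.eventually (eventually_gt_atTop x)).exists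
    exact ⟨k, hk⟩
  exact Nat.sInf_mem this

lemma nu_min {x : ℝ} {k : ℕ} (hk : k < nuD a x) : a k ≤ x :=
  not_lt.1 (Nat.notMem_of_lt_sInf hk)

lemma setEq (hsm : StrictMono a) (haT : Tendsto a atTop atTop) (x : ℝ) :
    {k | a k ≤ x} = ↑(Finset.range (nuD a x)) := by
  ext k
  simp only [mem_setOf_eq, Finset.coe_range, mem_Iio]
  constructor
  · intro hk
    by_contra hc
    exact absurd (le_trans (hsm.monotone (not_lt.1 hc)) hk) (not_le.2 (nu_spec haT x))
  · exact fun hk => nu_min hk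

lemma ncard_nu (hsm : StrictMono a) (haT : Tendsto a atTop atTop) (x : ℝ) :
    {k | a k ≤ x}.ncard = nuD a x := by
  rw [setEq hsm haT x, Set.ncard_coe_finset, Finset.card_range]

lemma nu_tendsto (hsm : StrictMono a) (haT : Tendsto a atTop atTop) :
    Tendsto (fun x : ℝ => nuD a x) atTop atTop := by
  apply tendsto_atTop.2
  intro K
  filter_upwards [eventually_ge_atTop (a K)] with x hx
  by_contra hc
  push_neg at hc
  exact absurd (nu_spec haT x) (not_lt.2 (le_trans (hsm.monotone hc.le) hx))

lemma nu_pos (ha0 : a 0 = 0) (haT : Tendsto a atTop atTop) {x : ℝ} (hx : 0 ≤ x) :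
    0 < nuD a x := by
  rcases Nat.eq_zero_or_pos (nuD a x) with h | h
  · have := nu_spec haT x
    rw [h, ha0] at this
    linarith
  · exact h

lemma nu_div (hsm : StrictMono a) (ha0 : a 0 = 0) (hm : 0 < m)
    (hal : Tendsto (fun n : ℕ => a n / n) atTop (𝓝 m)) :
    Tendsto (fun x : ℝ => (nuD a x : ℝ) / x) atTop (𝓝 m⁻¹) := by
  have haT := aTop hal hm
  have hnuT := nu_tendsto hsm haT
  have hnuT' : Tendsto (fun x : ℝ => ((nuD a x : ℝ))) atTop atTop :=
    tendsto_natCast_atTop_atTop.comp hnuT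
  -- upper comparison: a (nu x) / nu x → m
  have h1 : Tendsto (fun x : ℝ => a (nuD a x) / (nuD a x : ℝ)) atTop (𝓝 m) :=
    hal.comp hnuT
  -- lower comparison
  have hsubT : Tendsto (fun x : ℝ => nuD a x - 1) atTop atTop :=
    (tendsto_sub_atTop_nat 1).comp hnuT
  have h2a : Tendsto (fun x : ℝ => a (nuD a x - 1) / ((nuD a x - 1 : ℕ) : ℝ)) atTop (𝓝 m) :=
    hal.comp hsubT
  have hinv : Tendsto (fun x : ℝ => 1 / (nuD a x : ℝ)) atTop (𝓝 0) :=
    tendsto_one_div_atTop_nhds_zero_nat.comp hnuT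
  have hfrac : Tendsto (fun x : ℝ => ((nuD a x : ℝ) - 1) / (nuD a x : ℝ)) atTop (𝓝 1) := by
    have : Tendsto (fun x : ℝ => 1 - 1 / (nuD a x : ℝ)) atTop (𝓝 (1 - 0)) :=
      tendsto_const_nhds.sub hinv
    rw [sub_zero] at this
    apply this.congr'
    filter_upwards [hnuT'.eventually (eventually_gt_atTop 0)] with x hx
    field_simp
  have h2 : Tendsto (fun x : ℝ => a (nuD a x - 1) / (nuD a x : ℝ)) atTop (𝓝 m) := by
    have hmul : Tendsto
        (fun x : ℝ => (a (nuD a x - 1) / ((nuD a x - 1 : ℕ) : ℝ)) *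
          (((nuD a x : ℝ) - 1) / (nuD a x : ℝ))) atTop (𝓝 (m * 1)) := h2a.mul hfrac
    rw [mul_one] at hmul
    apply hmul.congr'
    filter_upwards [hnuT.eventually (eventually_ge_atTop 2)] with x hx
    have h1x : ((nuD a x - 1 : ℕ) : ℝ) = (nuD a x : ℝ) - 1 := by
      have : 1 ≤ nuD a x := le_trans (by norm_num) hx
      push_cast [this]
      ring
    have hne : ((nuD a x - 1 : ℕ) : ℝ) ≠ 0 := by
      rw [h1x]
      have : (2 : ℝ) ≤ (nuD a x : ℝ) := by exact_mod_cast hx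
      linarith
    have hne2 : (nuD a x : ℝ) ≠ 0 := by
      have : (2 : ℝ) ≤ (nuD a x : ℝ) := by exact_mod_cast hx
      linarith
    rw [h1x] at hne ⊢
    field_simp
  -- squeeze x / nu x between a(nu-1)/nu and a(nu)/nu
  have hmid : Tendsto (fun x : ℝ => x / (nuD a x : ℝ)) atTop (𝓝 m) := by
    apply tendsto_of_tendsto_of_tendsto_of_le_of_le' h2 h1
    · filter_upwards [eventually_ge_atTop 0] with x hx
      have hp := nu_pos ha0 haT hx
      have hle : a (nuD a x - 1) ≤ x := nu_min (Nat.sub_lt hp one_pos)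
      have : (0:ℝ) ≤ (nuD a x : ℝ) := Nat.cast_nonneg _
      gcongr
    · filter_upwards [eventually_ge_atTop 0] with x hx
      have hle : x ≤ a (nuD a x) := (nu_spec haT x).le
      have : (0:ℝ) ≤ (nuD a x : ℝ) := Nat.cast_nonneg _
      gcongr
  -- invert
  have := hmid.inv₀ (ne_of_gt hm)
  apply this.congr'
  filter_upwards [eventually_gt_atTop 0] with x hx
  rw [inv_div]


/-- number of `k < K` with `b k ≤ j` -/
noncomputable def GD (b : ℕ → ℝ) (j K : ℕ) : ℕ := ((Finset.range K).filter (fun k => b k ≤ (j:ℝ))).card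

lemma finite_le (hsm : StrictMono a) (haT : Tendsto a atTop atTop) (x : ℝ) :
    {k | a k ≤ x}.Finite := by
  rw [setEq hsm haT x]
  exact (Finset.range (nuD a x)).finite_toSet

lemma count_between (hsm : StrictMono a) (ha0 : a 0 = 0) (haT : Tendsto a atTop atTop)
    (hb : ∀ k, 0 < b k) (f : ℝ → ℕ)
    (hfe : ∀ x, (f x : ℝ) = ({k | a k + b k < x}.ncard : ℝ) ∨
      (f x : ℝ) = ({k | a k + b k ≤ x}.ncard : ℝ)) (x : ℝ) (j : ℕ) :
    GD b j (nuD a (x - j - 1)) ≤ f x ∧ f x ≤ nuD a x := by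
  have hsubLe : {k | a k + b k ≤ x} ⊆ {k | a k ≤ x} := fun k hk => by
    have := hb k
    simp only [mem_setOf_eq] at hk ⊢
    linarith
  have hsubLt : {k | a k + b k < x} ⊆ {k | a k ≤ x} := fun k hk => by
    have := hb k
    simp only [mem_setOf_eq] at hk ⊢
    linarith
  have hfin := finite_le hsm haT x
  have hcardLe : {k | a k + b k ≤ x}.ncard ≤ nuD a x := by
    rw [← ncard_nu hsm haT x]
    exact Set.ncard_le_ncard hsubLe hfin
  have hcardLt : {k | a k + b k < x}.ncard ≤ nuD a x := by
    rw [← ncard_nu hsm haT x]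
    exact Set.ncard_le_ncard hsubLt hfin
  have hlowLt : GD b j (nuD a (x - j - 1)) ≤ {k | a k + b k < x}.ncard := by
    have hsub : ↑((Finset.range (nuD a (x - j - 1))).filter (fun k => b k ≤ (j:ℝ)))
        ⊆ {k | a k + b k < x} := by
      intro k hk
      simp only [Finset.coe_filter, Finset.mem_range, mem_setOf_eq] at hk ⊢
      have h1 : a k ≤ x - j - 1 := nu_min hk.1
      have h2 := hk.2
      linarith
    calc GD b j (nuD a (x - j - 1))
        = (↑((Finset.range (nuD a (x - j - 1))).filter (fun k => b k ≤ (j:ℝ))) : Set ℕ).ncard := by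
          rw [Set.ncard_coe_finset]; rfl
      _ ≤ _ := Set.ncard_le_ncard hsub (hfin.subset hsubLt)
  have hLtLe : {k | a k + b k < x}.ncard ≤ {k | a k + b k ≤ x}.ncard :=
    Set.ncard_le_ncard (fun k hk => le_of_lt (show a k + b k < x from hk)) (hfin.subset hsubLe)
  rcases hfe x with h | h
  · have hfx : f x = {k | a k + b k < x}.ncard := by exact_mod_cast h
    exact ⟨by rw [hfx]; exact hlowLt, by rw [hfx]; exact hcardLt⟩
  · have hfx : f x = {k | a k + b k ≤ x}.ncard := by exact_mod_cast h
    exact ⟨by rw [hfx]; exact le_trans hlowLt hLtLe, by rw [hfx]; exact hcardLe⟩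

lemma GD_le (j K : ℕ) : GD b j K ≤ K := by
  calc GD b j K ≤ (Finset.range K).card := Finset.card_filter_le _ _
    _ = K := Finset.card_range K

lemma count_div_lim (hsm : StrictMono a) (ha0 : a 0 = 0) (hm : 0 < m)
    (hal : Tendsto (fun n : ℕ => a n / n) atTop (𝓝 m))
    {F : ℕ → ℝ} (hF : Tendsto F atTop (𝓝 1))
    (hG : ∀ j : ℕ, Tendsto (fun K : ℕ => (GD b j K : ℝ) / K) atTop (𝓝 (F j)))
    (f : ℝ → ℕ)
    (hlow : ∀ x (j : ℕ), GD b j (nuD a (x - j - 1)) ≤ f x)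
    (hup : ∀ x, f x ≤ nuD a x) :
    Tendsto (fun x : ℝ => (f x : ℝ) / x) atTop (𝓝 m⁻¹) := by
  have haT := aTop hal hm
  have hnuT := nu_tendsto hsm haT
  have hnud := nu_div hsm ha0 hm hal
  rw [Metric.tendsto_nhds]
  intro ε hε
  -- choose j with F j * m⁻¹ > m⁻¹ - ε / 2
  have hFm : Tendsto (fun j => F j * m⁻¹) atTop (𝓝 (1 * m⁻¹)) := hF.mul_const _
  rw [one_mul] at hFm
  obtain ⟨j, hj⟩ := (hFm.eventually (eventually_gt_nhds
    (by linarith [inv_pos.2 hm] : m⁻¹ - ε / 2 < m⁻¹))).exists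
  -- the shifted argument tends to atTop
  have hshift : Tendsto (fun x : ℝ => x - j - 1) atTop atTop := by
    simp only [sub_sub]
    exact tendsto_atTop_add_const_right atTop _ tendsto_id
  have hnuS : Tendsto (fun x : ℝ => nuD a (x - j - 1)) atTop atTop := hnuT.comp hshift
  -- lower bound function tends to F j * m⁻¹
  have hGcomp : Tendsto (fun x : ℝ =>
      (GD b j (nuD a (x - j - 1)) : ℝ) / (nuD a (x - j - 1) : ℝ)) atTop (𝓝 (F j)) :=
    (hG j).comp hnuS
  have hnuScomp : Tendsto (fun x : ℝ => (nuD a (x - j - 1) : ℝ) / x) atTop (𝓝 m⁻¹) := by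
    have h1 : Tendsto (fun x : ℝ => (nuD a (x - j - 1) : ℝ) / (x - j - 1)) atTop (𝓝 m⁻¹) :=
      hnud.comp hshift
    have h2 : Tendsto (fun x : ℝ => (x - j - 1) / x) atTop (𝓝 1) := by
      have : Tendsto (fun x : ℝ => 1 - ((j:ℝ) + 1) / x) atTop (𝓝 (1 - 0)) :=
        tendsto_const_nhds.sub (tendsto_const_nhds.div_atTop tendsto_id)
      rw [sub_zero] at this
      apply this.congr'
      filter_upwards [eventually_gt_atTop 0] with x hx
      field_simp
      ring
    have := h1.mul h2
    rw [mul_one] at this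
    apply this.congr'
    filter_upwards [eventually_gt_atTop ((j:ℝ) + 1)] with x hx
    have hne : x - j - 1 ≠ 0 := by linarith
    field_simp
  have hlowlim : Tendsto (fun x : ℝ => (GD b j (nuD a (x - j - 1)) : ℝ) / x)
      atTop (𝓝 (F j * m⁻¹)) := by
    have := hGcomp.mul hnuScomp
    apply this.congr
    intro x
    rcases eq_or_ne ((nuD a (x - j - 1) : ℝ)) 0 with h0 | h0
    · have h00 : nuD a (x - j - 1) = 0 := by exact_mod_cast h0
      have hg0 : GD b j (nuD a (x - j - 1)) = 0 := by
        have := GD_le (b := b) j (nuD a (x - j - 1)); omega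
      simp [hg0]
    · field_simp
  filter_upwards [hnud.eventually (eventually_lt_nhds (by linarith : m⁻¹ < m⁻¹ + ε/2)),
    hlowlim.eventually (eventually_gt_nhds (by linarith : m⁻¹ - ε/2 < F j * m⁻¹)),
    eventually_gt_atTop 0] with x hx1 hx2 hx3
  rw [Real.dist_eq, abs_sub_lt_iff]
  constructor
  · have hU : (f x : ℝ) / x ≤ (nuD a x : ℝ) / x := by
      gcongr <;> first
        | exact hx3.le
        | exact_mod_cast hup x
    linarith
  · have hL : (GD b j (nuD a (x - j - 1)) : ℝ) / x ≤ (f x : ℝ) / x := by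
      gcongr <;> first
        | exact hx3.le
        | exact_mod_cast hlow x j
    linarith

lemma sup_tendsto (g : ℕ → ℝ → ℝ) (hmono : ∀ n, Monotone (g n))
    (hpt : ∀ t ∈ Icc (0:ℝ) 1, Tendsto (fun n => g n t) atTop (𝓝 t)) :
    Tendsto (fun n => ⨆ t : Icc (0:ℝ) 1, |g n (t:ℝ) - (t:ℝ)|) atTop (𝓝 0) := by
  rw [Metric.tendsto_nhds]
  intro ε hε
  obtain ⟨M, hM⟩ := exists_nat_gt (4 / ε)
  have hM0 : (0:ℝ) < M := lt_trans (div_pos four_pos hε) hM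
  have hMnat : 0 < M := by exact_mod_cast hM0
  have hMinv : 1 / (M:ℝ) < ε / 4 := by
    rw [div_lt_div_iff₀ hM0 four_pos]
    nlinarith [(div_lt_iff₀ hε).1 hM]
  have hgrid : ∀ᶠ n in atTop, ∀ i ∈ Finset.range (M+1), |g n ((i:ℝ)/M) - (i:ℝ)/M| < ε/4 := by
    rw [eventually_all_finset]
    intro i hi
    have him : (i:ℝ) ≤ M := by
      have := Nat.lt_succ_iff.1 (Finset.mem_range.1 hi)
      exact_mod_cast this
    have hti : (i:ℝ)/M ∈ Icc (0:ℝ) 1 := ⟨by positivity, by rw [div_le_one hM0]; exact him⟩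
    have h2 : Tendsto (fun n => g n ((i:ℝ)/M) - (i:ℝ)/M) atTop (𝓝 0) := by
      have := (hpt _ hti).sub_const ((i:ℝ)/M)
      simpa using this
    have := Metric.tendsto_nhds.1 h2 (ε/4) (by linarith)
    simpa [Real.dist_eq] using this
  filter_upwards [hgrid] with n hn
  have hbound : ∀ t ∈ Icc (0:ℝ) 1, |g n t - t| ≤ ε/2 := by
    intro t ht
    set i : ℕ := min (Nat.floor (t * M)) (M - 1) with hidef
    have hiM : i + 1 ≤ M := by
      have : i ≤ M - 1 := min_le_right _ _
      omega
    have hil : (i:ℝ)/M ≤ t := by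
      rw [div_le_iff₀ hM0]
      calc (i:ℝ) ≤ (Nat.floor (t * M) : ℝ) := by exact_mod_cast min_le_left _ _
        _ ≤ t * M := Nat.floor_le (by nlinarith [ht.1])
    have hir : t ≤ ((i:ℝ)+1)/M := by
      rcases le_or_gt (Nat.floor (t*M)) (M-1) with hc | hc
      · have hie : i = Nat.floor (t*M) := min_eq_left hc
        rw [le_div_iff₀ hM0]
        have hfl := Nat.lt_floor_add_one (t*M)
        rw [hie]
        push_cast
        linarith
      · have hie : i = M - 1 := min_eq_right hc.le
        have : ((i:ℝ)+1)/M = 1 := by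
          rw [hie]
          have : ((M - 1 : ℕ):ℝ) + 1 = (M:ℝ) := by
            push_cast [Nat.cast_sub hMnat]
            ring
          rw [this, div_self (ne_of_gt hM0)]
        rw [this]
        exact ht.2
    have hB1 := hn (i+1) (Finset.mem_range.2 (by omega))
    have hB0 := hn i (Finset.mem_range.2 (by omega))
    rw [abs_lt] at hB1 hB0
    have hcast : (((i:ℕ)+1 : ℕ):ℝ) = (i:ℝ) + 1 := by push_cast; ring
    rw [hcast] at hB1
    have hup : g n t ≤ g n (((i:ℝ)+1)/M) := hmono n hir
    have hdn : g n ((i:ℝ)/M) ≤ g n t := hmono n hil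
    have e1 : ((i:ℝ)+1)/M = (i:ℝ)/M + 1/M := by ring
    rw [abs_le]
    constructor
    · -- lower
      have h3 : t - 1/M ≤ (i:ℝ)/M := by
        rw [e1] at hir
        linarith
      nlinarith [hB0.1, hdn]
    · have h4 : ((i:ℝ)+1)/M ≤ t + 1/M := by
        rw [e1]
        linarith
      nlinarith [hB1.2, hup]
  have hne : Nonempty (Icc (0:ℝ) 1) := ⟨⟨0, le_refl _, zero_le_one⟩⟩
  have hbdd : BddAbove (Set.range fun t : Icc (0:ℝ) 1 => |g n (t:ℝ) - (t:ℝ)|) :=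
    ⟨ε/2, by
      rintro y ⟨t, rfl⟩
      exact hbound t t.2⟩
  have hsle : (⨆ t : Icc (0:ℝ) 1, |g n (t:ℝ) - (t:ℝ)|) ≤ ε/2 :=
    ciSup_le (fun t => hbound t t.2)
  have hs0 : 0 ≤ ⨆ t : Icc (0:ℝ) 1, |g n (t:ℝ) - (t:ℝ)| :=
    le_trans (abs_nonneg _) (le_ciSup hbdd ⟨0, le_refl _, zero_le_one⟩)
  rw [Real.dist_0_eq_abs, abs_of_nonneg hs0]
  linarith

lemma det_main_s10 (hsm : StrictMono a) (ha0 : a 0 = 0) (hm : 0 < m)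
    (hal : Tendsto (fun n : ℕ => a n / n) atTop (𝓝 m)) (hb : ∀ k, 0 < b k)
    {F : ℕ → ℝ} (hF : Tendsto F atTop (𝓝 1))
    (hG : ∀ j : ℕ, Tendsto (fun K : ℕ => (GD b j K : ℝ) / K) atTop (𝓝 (F j))) :
    Tendsto (fun n : ℕ => ⨆ t : Icc (0:ℝ) 1,
      |m * (({k | a k + b k ≤ (n:ℝ)}.ncard : ℝ)
        - ({k | a k + b k < (n:ℝ) * (1 - (t:ℝ))}.ncard : ℝ)) / n - (t:ℝ)|)
      atTop (𝓝 0) := by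
  have haT := aTop hal hm
  set Nc : ℝ → ℕ := fun x => {k | a k + b k ≤ x}.ncard with hNcdef
  set Nl : ℝ → ℕ := fun x => {k | a k + b k < x}.ncard with hNldef
  have hNcB := fun x j => count_between hsm ha0 haT hb Nc (fun x => Or.inr rfl) x j
  have hNlB := fun x j => count_between hsm ha0 haT hb Nl (fun x => Or.inl rfl) x j
  have hNc : Tendsto (fun x : ℝ => (Nc x : ℝ) / x) atTop (𝓝 m⁻¹) :=
    count_div_lim hsm ha0 hm hal hF hG Nc (fun x j => (hNcB x j).1) (fun x => (hNcB x 0).2)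
  have hNl : Tendsto (fun x : ℝ => (Nl x : ℝ) / x) atTop (𝓝 m⁻¹) :=
    count_div_lim hsm ha0 hm hal hF hG Nl (fun x j => (hNlB x j).1) (fun x => (hNlB x 0).2)
  have hanonneg : ∀ k, 0 ≤ a k := fun k => by
    rcases Nat.eq_zero_or_pos k with rfl | hk
    · exact le_of_eq ha0.symm
    · exact le_of_lt (ha0 ▸ hsm hk)
  apply sup_tendsto (fun n t => m * ((Nc n : ℝ) - (Nl ((n:ℝ) * (1 - t)) : ℝ)) / n)
  · -- monotone
    intro n t t' htt'
    have hmono : (Nl ((n:ℝ) * (1 - t')) : ℝ) ≤ (Nl ((n:ℝ) * (1 - t)) : ℝ) := by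
      have hxy : (n:ℝ) * (1 - t') ≤ (n:ℝ) * (1 - t) := by
        have : (0:ℝ) ≤ n := Nat.cast_nonneg n
        nlinarith
      have hsub : {k | a k + b k < (n:ℝ) * (1 - t')} ⊆ {k | a k + b k < (n:ℝ) * (1 - t)} :=
        fun k hk => lt_of_lt_of_le hk hxy
      have hfin : {k | a k + b k < (n:ℝ) * (1 - t)}.Finite :=
        (finite_le hsm haT ((n:ℝ) * (1 - t))).subset (fun k hk => by
          have := hb k
          simp only [mem_setOf_eq] at hk ⊢
          linarith)
      exact_mod_cast Set.ncard_le_ncard hsub hfin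
    rcases Nat.eq_zero_or_pos n with rfl | hn
    · simp
    · have hnR : (0:ℝ) < (n:ℝ) := by exact_mod_cast hn
      exact div_le_div_of_nonneg_right
        (mul_le_mul_of_nonneg_left (by linarith) hm.le) hnR.le
  · -- pointwise
    intro t ht
    have hA : Tendsto (fun n : ℕ => (Nc (n:ℝ) : ℝ) / (n:ℝ)) atTop (𝓝 m⁻¹) :=
      hNc.comp tendsto_natCast_atTop_atTop
    have hB : Tendsto (fun n : ℕ => (Nl ((n:ℝ) * (1 - t)) : ℝ) / (n:ℝ)) atTop
        (𝓝 ((1 - t) * m⁻¹)) := by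
      rcases eq_or_lt_of_le ht.2 with h1 | h1
      · -- t = 1
        have hz : ∀ n : ℕ, Nl ((n:ℝ) * (1 - t)) = 0 := by
          intro n
          have : {k | a k + b k < (n:ℝ) * (1 - t)} = ∅ := by
            ext k
            simp only [mem_setOf_eq, mem_empty_iff_false, iff_false, not_lt]
            rw [← h1]
            have := hb k
            have := hanonneg k
            norm_num
            linarith
          simp only [hNldef, this, Set.ncard_empty]
        have : (fun n : ℕ => (Nl ((n:ℝ) * (1 - t)) : ℝ) / (n:ℝ)) = fun n : ℕ => (0:ℝ) := by
          funext n
          rw [hz n]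
          simp
        rw [this, ← h1]
        simpa using tendsto_const_nhds
      · -- t < 1
        have h1t : 0 < 1 - t := by linarith
        have hy : Tendsto (fun n : ℕ => (n:ℝ) * (1 - t)) atTop atTop :=
          Tendsto.atTop_mul_const h1t tendsto_natCast_atTop_atTop
        have hcomp : Tendsto (fun n : ℕ => (Nl ((n:ℝ) * (1 - t)) : ℝ) / ((n:ℝ) * (1 - t)))
            atTop (𝓝 m⁻¹) := hNl.comp hy
        have := hcomp.mul_const (1 - t)
        have heq : m⁻¹ * (1 - t) = (1 - t) * m⁻¹ := mul_comm _ _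
        rw [heq] at this
        apply this.congr'
        filter_upwards [eventually_ge_atTop 1] with n hn
        have hnR : (0:ℝ) < (n:ℝ) := by exact_mod_cast hn
        field_simp
    have hlim : Tendsto (fun n : ℕ =>
        m * ((Nc (n:ℝ) : ℝ) / (n:ℝ) - (Nl ((n:ℝ) * (1 - t)) : ℝ) / (n:ℝ))) atTop
        (𝓝 (m * (m⁻¹ - (1 - t) * m⁻¹))) := (hA.sub hB).const_mul m
    have hval : m * (m⁻¹ - (1 - t) * m⁻¹) = t := by
      field_simp
      ring
    rw [hval] at hlim
    apply hlim.congr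
    intro n
    rw [mul_div_assoc, sub_div]

end Det

lemma tsum_ite_count {p : ℕ → Prop} [DecidablePred p] (hfin : {k | p k}.Finite) :
    (∑' k : ℕ, if p k then (1:ℝ≥0∞) else 0).toReal = ({k | p k}.ncard : ℝ) := by
  have h1 : ∑' k : ℕ, (if p k then (1:ℝ≥0∞) else 0)
      = ∑ k ∈ hfin.toFinset, (if p k then (1:ℝ≥0∞) else 0) := by
    apply tsum_eq_sum
    intro k hk
    rw [Set.Finite.mem_toFinset] at hk
    simp only [mem_setOf_eq] at hk
    simp [hk]
  rw [h1]
  have h2 : ∑ k ∈ hfin.toFinset, (if p k then (1:ℝ≥0∞) else 0)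
      = (hfin.toFinset.card : ℝ≥0∞) := by
    have hone : ∀ k ∈ hfin.toFinset, (if p k then (1:ℝ≥0∞) else 0) = 1 := by
      intro k hk
      have := Set.Finite.mem_toFinset hfin |>.1 hk
      simp only [mem_setOf_eq] at this
      simp [this]
    rw [Finset.sum_congr rfl hone, Finset.sum_const, nsmul_eq_mul, mul_one]
  rw [h2, Set.ncard_eq_toFinset_card _ hfin]
  simp

theorem stmt_10 {Ω : Type*} [MeasurableSpace Ω] (μ : Measure Ω) [IsProbabilityMeasure μ]
    (ξ η : ℕ → Ω → ℝ) (hmeas : ∀ i, Measurable (fun ω => (ξ i ω, η i ω)))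
    (hpos : ∀ i, ∀ᵐ ω ∂μ, 0 < ξ i ω ∧ 0 < η i ω)
    (hindep : iIndepFun (fun i ω => (ξ i ω, η i ω)) μ)
    (hid : ∀ i, IdentDistrib (fun ω => (ξ i ω, η i ω)) (fun ω => (ξ 0 ω, η 0 ω)) μ μ)
    (hint : Integrable (ξ 0) μ) (m : ℝ) (hm : m = ∫ ω, ξ 0 ω ∂μ) :
    ∀ᵐ ω ∂μ, Tendsto
      (fun n : ℕ => ⨆ t : Icc (0:ℝ) 1,
        |m * ((prwCount ξ η (n : ℝ) ω).toReal
              - (prwCountLeft ξ η ((n : ℝ) * (1 - (t : ℝ))) ω).toReal) / (n : ℝ)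
          - (t : ℝ)|)
      atTop (nhds 0) := by
  -- measurability of components
  have hxi_meas : ∀ i, Measurable (ξ i) := fun i => (hmeas i).fst
  have heta_meas : ∀ i, Measurable (η i) := fun i => (hmeas i).snd
  -- m is positive
  have h0pos : ∀ᵐ ω ∂μ, 0 < ξ 0 ω := (hpos 0).mono fun ω h => h.1
  have hm_pos : 0 < m := by
    rw [hm, integral_pos_iff_support_of_nonneg_ae (h0pos.mono fun ω h => h.le) hint]
    have hsub : {ω | 0 < ξ 0 ω} ⊆ Function.support (ξ 0) := fun ω h => ne_of_gt h
    have hAmeas : MeasurableSet {ω | 0 < ξ 0 ω} := measurableSet_lt measurable_const (hxi_meas 0)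
    have hA1 : μ {ω | 0 < ξ 0 ω} = 1 := by
      have hc : μ {ω | 0 < ξ 0 ω}ᶜ = 0 := by
        rw [ae_iff] at h0pos
        have hceq : {ω | 0 < ξ 0 ω}ᶜ = {ω | ¬ 0 < ξ 0 ω} := by
          ext ω; simp
        rw [hceq]
        exact h0pos
      have := measure_add_measure_compl (μ := μ) hAmeas
      rw [hc, add_zero, measure_univ] at this
      exact this
    calc (0:ℝ≥0∞) < 1 := by norm_num
      _ = μ {ω | 0 < ξ 0 ω} := hA1.symm
      _ ≤ μ (Function.support (ξ 0)) := measure_mono hsub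
  -- SLLN for ξ
  have hxi_indep : Pairwise (Function.onFun (IndepFun · · μ) ξ) := by
    intro i j hij
    exact (hindep.indepFun hij).comp measurable_fst measurable_fst
  have hxi_ident : ∀ i, IdentDistrib (ξ i) (ξ 0) μ μ := fun i => (hid i).comp measurable_fst
  have hSLLN1 := strong_law_ae_real ξ hint hxi_indep hxi_ident
  rw [← hm] at hSLLN1
  -- SLLN for indicators of η
  set F : ℕ → ℝ := fun j => (μ {ω | η 0 ω ≤ (j:ℝ)}).toReal with hFdef
  have hAj_meas : ∀ j : ℕ, MeasurableSet {ω | η 0 ω ≤ (j:ℝ)} := fun j =>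
    measurableSet_le (heta_meas 0) measurable_const
  have hF1 : Tendsto F atTop (𝓝 1) := by
    have hmono : Monotone (fun j : ℕ => {ω | η 0 ω ≤ (j:ℝ)}) := by
      intro i j hij ω hω
      simp only [mem_setOf_eq] at hω ⊢
      exact le_trans hω (by exact_mod_cast hij)
    have hU : (⋃ j : ℕ, {ω | η 0 ω ≤ (j:ℝ)}) = univ := by
      apply eq_univ_of_forall
      intro ω
      obtain ⟨j, hj⟩ := exists_nat_ge (η 0 ω)
      exact mem_iUnion.2 ⟨j, hj⟩
    have htm := tendsto_measure_iUnion_atTop (μ := μ) hmono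
    rw [hU, measure_univ] at htm
    have := (ENNReal.tendsto_toReal (by norm_num : (1:ℝ≥0∞) ≠ ⊤)).comp htm
    exact this
  have hSLLNj : ∀ j : ℕ, ∀ᵐ ω ∂μ,
      Tendsto (fun K : ℕ => (∑ i ∈ Finset.range K,
        (if η i ω ≤ (j:ℝ) then (1:ℝ) else 0)) / K) atTop (𝓝 (F j)) := by
    intro j
    set g : ℝ × ℝ → ℝ := fun p => if p.2 ≤ (j:ℝ) then (1:ℝ) else 0 with hgdef
    have hg_meas : Measurable g :=
      Measurable.ite (measurableSet_le measurable_snd measurable_const)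
        measurable_const measurable_const
    set Y : ℕ → Ω → ℝ := fun k ω => if η k ω ≤ (j:ℝ) then (1:ℝ) else 0 with hYdef
    have hYg : ∀ k, Y k = g ∘ (fun ω => (ξ k ω, η k ω)) := fun k => rfl
    have hY_meas : ∀ k, Measurable (Y k) := fun k => (hg_meas.comp (hmeas k))
    have hY_int : Integrable (Y 0) μ := by
      apply (integrable_const (1:ℝ)).mono' (hY_meas 0).aestronglyMeasurable
      filter_upwards with ω
      simp only [hYdef]
      split <;> simp
    have hY_indep : Pairwise (Function.onFun (IndepFun · · μ) Y) := by
      intro i k hik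
      rw [Function.onFun, hYg i, hYg k]
      exact (hindep.indepFun hik).comp hg_meas hg_meas
    have hY_ident : ∀ k, IdentDistrib (Y k) (Y 0) μ μ := by
      intro k
      rw [hYg k, hYg 0]
      exact (hid k).comp hg_meas
    have h := strong_law_ae_real Y hY_int hY_indep hY_ident
    have hInt : ∫ ω, Y 0 ω ∂μ = F j := by
      have he : (Y 0) = Set.indicator {ω | η 0 ω ≤ (j:ℝ)} (fun _ => (1:ℝ)) := by
        funext ω
        rw [Set.indicator_apply]
        rfl
      rw [he, integral_indicator_const (1:ℝ) (hAj_meas j)]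
      simp [hFdef]
      rfl
    rw [hInt] at h
    exact h
  -- combine a.e. statements
  filter_upwards [ae_all_iff.2 hpos, hSLLN1, ae_all_iff.2 hSLLNj] with ω hposω hslω hgω
  set a : ℕ → ℝ := fun k => partialSum ξ k ω with hadef
  set b : ℕ → ℝ := fun k => η k ω with hbdef
  have hsm : StrictMono a := by
    apply strictMono_nat_of_lt_succ
    intro k
    have : a (k + 1) = a k + ξ k ω := Finset.sum_range_succ _ k
    rw [this]
    linarith [(hposω k).1]
  have ha0 : a 0 = 0 := Finset.sum_range_zero _
  have hb : ∀ k, 0 < b k := fun k => (hposω k).2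
  have hal : Tendsto (fun n : ℕ => a n / n) atTop (𝓝 m) := hslω
  have haT : Tendsto a atTop atTop := aTop hal hm_pos
  have hG : ∀ j : ℕ, Tendsto (fun K : ℕ => (GD b j K : ℝ) / K) atTop (𝓝 (F j)) := by
    intro j
    apply (hgω j).congr
    intro K
    congr 1
    rw [GD, Finset.card_filter]
    push_cast
    rfl
  have hdet := det_main_s10 hsm ha0 hm_pos hal hb hF1 hG
  have hfinLe : ∀ x : ℝ, {k | a k + b k ≤ x}.Finite := fun x =>
    (finite_le hsm haT x).subset (fun k hk => by
      have := hb k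
      simp only [mem_setOf_eq] at hk ⊢
      linarith)
  have hfinLt : ∀ x : ℝ, {k | a k + b k < x}.Finite := fun x =>
    (hfinLe x).subset (fun k hk => le_of_lt (show a k + b k < x from hk))
  have hCount : ∀ x : ℝ, (prwCount ξ η x ω).toReal = ({k | a k + b k ≤ x}.ncard : ℝ) :=
    fun x => tsum_ite_count (hfinLe x)
  have hCountL : ∀ x : ℝ, (prwCountLeft ξ η x ω).toReal = ({k | a k + b k < x}.ncard : ℝ) :=
    fun x => tsum_ite_count (hfinLt x)
  have heq : (fun n : ℕ => ⨆ t : Icc (0:ℝ) 1,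
        |m * ((prwCount ξ η (n : ℝ) ω).toReal
              - (prwCountLeft ξ η ((n : ℝ) * (1 - (t : ℝ))) ω).toReal) / (n : ℝ)
          - (t : ℝ)|)
      = (fun n : ℕ => ⨆ t : Icc (0:ℝ) 1,
        |m * (({k | a k + b k ≤ (n:ℝ)}.ncard : ℝ)
          - ({k | a k + b k < (n:ℝ) * (1 - (t:ℝ))}.ncard : ℝ)) / n - (t:ℝ)|) := by
    funext n
    congr 1
    funext t
    rw [hCount, hCountL]
  rw [heq]
  exact hdet
end
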